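/- arXiv:1002.2864 — 3 statements merged into one kernel-verified Lean document; each statement's English description precedes it below -/
import Mathlib

section
/- (Ruloid Theorem) Let G be a GSOS language and X ⊆ Var a finite set of variables. For each context D[x⃗] over Σ_G and each action c, there exists a finite set R_{D,c} of ruloids with conclusions of the form D[x⃗] →^c C[x⃗,y⃗] such that (1) every ruloid in R_{D,c} is sound for →_G and the set R_{D,c} is supporting for D[x⃗] and c, and (2) for every ρ ∈ R_{D,c}, the set of target variables of ρ is disjoint from X. -/
/-!
Common infrastructure for formalizing results about GSOS languages
("A rule-matching bisimulation method", Aceto et al.).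

* Variables are natural numbers (a countably infinite set).
* Terms over a signature given by a type `Op` of operation symbols with
  arities `ar : Op → ℕ`.
* GSOS rules and ruloids, the induced (sound and supported) transition
  relation, bisimilarity, ruloid systems, valid ruloids, initial transition
  formulae and rule-matching bisimulation.
-/

namespace GSOSPaper

/-- Terms over operation symbols `Op` with arity function `ar`;
variables are natural numbers. -/
inductive Tm (Op : Type) (ar : Op → ℕ) : Type
  | var : ℕ → Tm Op ar
  | app : (f : Op) → (Fin (ar f) → Tm Op ar) → Tm Op ar

namespace Tm

variable {Op : Type} {ar : Op → ℕ}

/-- The set of variables occurring in a term. -/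
def vars : Tm Op ar → Set ℕ
  | .var x => {x}
  | .app _ ts => ⋃ i, (ts i).vars

/-- The set of operation symbols occurring in a term. -/
def ops : Tm Op ar → Set Op
  | .var _ => ∅
  | .app f ts => insert f (⋃ i, (ts i).ops)

/-- A term is closed if it contains no variables. -/
def IsClosed (t : Tm Op ar) : Prop := t.vars = ∅

/-- Applying a substitution to a term. -/
def subst (σ : ℕ → Tm Op ar) : Tm Op ar → Tm Op ar
  | .var x => σ x
  | .app f ts => .app f fun i => (ts i).subst σ

/-- Renaming the variables of a term. -/
def rename (r : ℕ → ℕ) (t : Tm Op ar) : Tm Op ar :=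
  t.subst fun x => .var (r x)

/-- The number of occurrences of the variable `v` in a term. -/
def count (v : ℕ) : Tm Op ar → ℕ
  | .var x => if x = v then 1 else 0
  | .app _ ts => ∑ i, (ts i).count v

/-- Transporting a term along an arity-preserving map of operation symbols. -/
def map {Op' : Type} {ar' : Op' → ℕ} (ι : Op → Op') (h : ∀ f, ar' (ι f) = ar f) :
    Tm Op ar → Tm Op' ar'
  | .var x => .var x
  | .app f ts => .app (ι f) fun i => (ts (Fin.cast (h f) i)).map ι h

end Tm

/-- A closed `S`-substitution: every variable is sent to a closed term all of
whose operation symbols come from `S`. -/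
def ClosedSub {Op : Type} {ar : Op → ℕ} (S : Set Op) (σ : ℕ → Tm Op ar) : Prop :=
  ∀ x, (σ x).IsClosed ∧ (σ x).ops ⊆ S

/-- A rule (this data type is used both for GSOS rules and for ruloids):
positive premises `x →^a y` (coded as `(x, a, y)`), negative premises
`x ↛^a` (coded as `(x, a)`), a source term, an action, and a target term. -/
structure Rule (Op : Type) (ar : Op → ℕ) (Act : Type) where
  pos : Set (ℕ × Act × ℕ)
  neg : Set (ℕ × Act)
  src : Tm Op ar
  act : Act
  tgt : Tm Op ar

namespace Rule

variable {Op : Type} {ar : Op → ℕ} {Act : Type}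

/-- The source variables of a rule/ruloid: the variables of its source. -/
def sourceVars (ρ : Rule Op ar Act) : Set ℕ := ρ.src.vars

/-- The target variables of a rule/ruloid: the right-hand sides of its
positive premises. -/
def targetVars (ρ : Rule Op ar Act) : Set ℕ := {y | ∃ x a, (x, a, y) ∈ ρ.pos}

/-- Well-formedness of a rule/ruloid: finitely many premises; the left-hand
sides of premises are source variables; the target variables are distinct
from the source variables and pairwise distinct (each target variable occurs
in exactly one positive premise); the variables of the target of the
conclusion occur among the source and target variables. -/
def WF (ρ : Rule Op ar Act) : Prop :=
  ρ.pos.Finite ∧ ρ.neg.Finite ∧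
  (∀ ⦃x a y⦄, (x, a, y) ∈ ρ.pos → x ∈ ρ.sourceVars ∧ y ∉ ρ.sourceVars) ∧
  (∀ ⦃x a⦄, (x, a) ∈ ρ.neg → x ∈ ρ.sourceVars) ∧
  (∀ ⦃x a y x' a'⦄, (x, a, y) ∈ ρ.pos → (x', a', y) ∈ ρ.pos → x = x' ∧ a = a') ∧
  ρ.tgt.vars ⊆ ρ.sourceVars ∪ ρ.targetVars

/-- A rule is in GSOS format if it is well formed and its source is
`f(x₁, …, x_l)` for an operation symbol `f` and distinct variables `x_i`. -/
def IsGSOSForm (ρ : Rule Op ar Act) : Prop :=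
  ρ.WF ∧ ∃ (f : Op) (x : Fin (ar f) → ℕ), Function.Injective x ∧
    ρ.src = Tm.app f fun i => Tm.var (x i)

/-- A rule is a de Simone rule if it has no negative premises, at most one
positive premise per source variable, a target in which every variable occurs
at most once, and a target containing no source variable that occurs in a
positive premise. -/
def IsDeSimone (ρ : Rule Op ar Act) : Prop :=
  ρ.neg = ∅ ∧
  (∀ ⦃x a y a' y'⦄, (x, a, y) ∈ ρ.pos → (x, a', y') ∈ ρ.pos → a = a' ∧ y = y') ∧
  (∀ v, ρ.tgt.count v ≤ 1) ∧
  (∀ ⦃x a y⦄, (x, a, y) ∈ ρ.pos → x ∉ ρ.tgt.vars)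

/-- `ρ` has principal operation `f`. -/
def PrincipalIs (ρ : Rule Op ar Act) (f : Op) : Prop := ∃ ts, ρ.src = Tm.app f ts

/-- A rule is non-inheriting if no source variable occurs in the target of
its conclusion. -/
def NonInheriting (ρ : Rule Op ar Act) : Prop := ∀ x ∈ ρ.sourceVars, x ∉ ρ.tgt.vars

/-- Renaming the variables of a rule/ruloid. -/
def rename (r : ℕ → ℕ) (ρ : Rule Op ar Act) : Rule Op ar Act where
  pos := (fun p : ℕ × Act × ℕ => (r p.1, p.2.1, r p.2.2)) '' ρ.pos
  neg := (fun p : ℕ × Act => (r p.1, p.2)) '' ρ.neg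
  src := ρ.src.rename r
  act := ρ.act
  tgt := ρ.tgt.rename r

/-- Transporting a rule along an arity-preserving map of operation symbols. -/
def map {Op' : Type} {ar' : Op' → ℕ} (ι : Op → Op') (h : ∀ f, ar' (ι f) = ar f)
    (ρ : Rule Op ar Act) : Rule Op' ar' Act where
  pos := ρ.pos
  neg := ρ.neg
  src := ρ.src.map ι h
  act := ρ.act
  tgt := ρ.tgt.map ι h

end Rule

/-- A language: a set of operation symbols together with a set of rules.
(Well-formedness is the separate predicate `Lang.WellFormed`.) -/
structure Lang (Op : Type) (ar : Op → ℕ) (Act : Type) where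
  ops : Set Op
  rules : Set (Rule Op ar Act)

/-- A GSOS language: finitely many operations, finitely many rules, and all
rules in GSOS format over the signature. -/
def Lang.WellFormed {Op : Type} {ar : Op → ℕ} {Act : Type} (L : Lang Op ar Act) : Prop :=
  L.ops.Finite ∧ L.rules.Finite ∧
  ∀ ρ ∈ L.rules, ρ.IsGSOSForm ∧ ρ.src.ops ⊆ L.ops ∧ ρ.tgt.ops ⊆ L.ops

variable {Op : Type} {ar : Op → ℕ} {Act : Type}

/-- `σ` satisfies the antecedents of `ρ` with respect to the transition
relation `Tr`. -/
def Satisfies (Tr : Tm Op ar → Act → Tm Op ar → Prop) (σ : ℕ → Tm Op ar)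
    (ρ : Rule Op ar Act) : Prop :=
  (∀ ⦃x a y⦄, (x, a, y) ∈ ρ.pos → Tr (σ x) a (σ y)) ∧
  (∀ ⦃x a⦄, (x, a) ∈ ρ.neg → ∀ q, ¬ Tr (σ x) a q)

/-- A rule/ruloid is sound for `Tr` (relative to closed `S`-substitutions) if
every closed substitution satisfying its antecedents yields an instance of
its conclusion that is in `Tr`. -/
def Rule.Sound (Tr : Tm Op ar → Act → Tm Op ar → Prop) (S : Set Op)
    (ρ : Rule Op ar Act) : Prop :=
  ∀ σ, ClosedSub S σ → Satisfies Tr σ ρ →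
    Tr (ρ.src.subst σ) ρ.act (ρ.tgt.subst σ)

/-- The rule/ruloid `ρ` supports the transition `p →^a q`. -/
def Supports (Tr : Tm Op ar → Act → Tm Op ar → Prop) (S : Set Op)
    (ρ : Rule Op ar Act) (p : Tm Op ar) (a : Act) (q : Tm Op ar) : Prop :=
  ∃ σ, ClosedSub S σ ∧ Satisfies Tr σ ρ ∧
    ρ.src.subst σ = p ∧ ρ.act = a ∧ ρ.tgt.subst σ = q

/-- `Tr` is the transition relation induced by the language `L`: it is sound
(every rule instance with satisfied antecedents is a transition) and
supported (every transition is supported by some rule of `L`).  For a GSOS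
language there is a unique such relation. -/
def IsTransRel (L : Lang Op ar Act) (Tr : Tm Op ar → Act → Tm Op ar → Prop) : Prop :=
  (∀ ρ ∈ L.rules, ρ.Sound Tr L.ops) ∧
  (∀ p a q, Tr p a q → ∃ ρ ∈ L.rules, Supports Tr L.ops ρ p a q)

/-- A rule is junk if it supports no transition. -/
def IsJunk (L : Lang Op ar Act) (Tr : Tm Op ar → Act → Tm Op ar → Prop)
    (ρ : Rule Op ar Act) : Prop :=
  ∀ p a q, ¬ Supports Tr L.ops ρ p a q

/-- `R` is a bisimulation with respect to `Tr`. -/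
def IsBisim (Tr : Tm Op ar → Act → Tm Op ar → Prop)
    (R : Tm Op ar → Tm Op ar → Prop) : Prop :=
  Symmetric R ∧ ∀ p q, R p q → ∀ a p', Tr p a p' → ∃ q', Tr q a q' ∧ R p' q'

/-- Bisimilarity with respect to `Tr`. -/
def Bisim (Tr : Tm Op ar → Act → Tm Op ar → Prop) (p q : Tm Op ar) : Prop :=
  ∃ R, IsBisim Tr R ∧ R p q

/-- `ρ` is a ruloid for the context `D` (over the operations `S`). -/
def IsRuloidFor (S : Set Op) (ρ : Rule Op ar Act) (D : Tm Op ar) : Prop :=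
  ρ.WF ∧ ρ.src = D ∧ ρ.tgt.ops ⊆ S

/-- A set `R` of ruloids is supporting for the context `D` and the action `c`:
whenever a closed instance of `D` has a `c`-transition, that transition is an
instance of the conclusion of a ruloid of `R` under a closed substitution
satisfying its antecedents. -/
def SupportingFor (Tr : Tm Op ar → Act → Tm Op ar → Prop) (S : Set Op)
    (R : Set (Rule Op ar Act)) (D : Tm Op ar) (c : Act) : Prop :=
  ∀ σ₀ q, ClosedSub S σ₀ → Tr (D.subst σ₀) c q →
    ∃ ρ ∈ R, ∃ σ, ClosedSub S σ ∧ Satisfies Tr σ ρ ∧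
      ρ.src.subst σ = D.subst σ₀ ∧ ρ.act = c ∧ ρ.tgt.subst σ = q

/-- `rul` assigns to each term `P` a finite set `rul P` of ruloids for `P`
that is sound and supporting for `P` and each action (such an assignment
exists by the Ruloid Theorem). -/
def IsRuloidSystem (L : Lang Op ar Act) (Tr : Tm Op ar → Act → Tm Op ar → Prop)
    (rul : Tm Op ar → Set (Rule Op ar Act)) : Prop :=
  ∀ P : Tm Op ar,
    (rul P).Finite ∧
    (∀ ρ ∈ rul P, IsRuloidFor L.ops ρ P) ∧
    (∀ ρ ∈ rul P, ρ.Sound Tr L.ops) ∧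
    (∀ c : Act, SupportingFor Tr L.ops {ρ | ρ ∈ rul P ∧ ρ.act = c} P c)

/-- The ruloid system `rul` is junk-free: every ruloid in it supports some
transition, i.e. its antecedents are satisfiable by a closed substitution. -/
def JunkFree (L : Lang Op ar Act) (Tr : Tm Op ar → Act → Tm Op ar → Prop)
    (rul : Tm Op ar → Set (Rule Op ar Act)) : Prop :=
  ∀ P, ∀ ρ ∈ rul P, ∃ σ, ClosedSub L.ops σ ∧ Satisfies Tr σ ρ

/-- `ρ` is a valid ruloid for `P`: it is obtained from a ruloid `ρ' ∈ rul P`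
by an injective renaming of its target variables to variables that are not
among the source variables of `ρ`. -/
def IsValidRuloid (rul : Tm Op ar → Set (Rule Op ar Act)) (P : Tm Op ar)
    (ρ : Rule Op ar Act) : Prop :=
  ∃ ρ' ∈ rul P, ∃ r : ℕ → ℕ,
    (∀ x, x ∉ ρ'.targetVars → r x = x) ∧
    Set.InjOn r ρ'.targetVars ∧
    (∀ y ∈ ρ'.targetVars, r y ∉ ρ.sourceVars) ∧
    ρ = ρ'.rename r

/-- `σ` satisfies `hyps(ρ)`, the conjunction of the initial transition
formulae corresponding to the antecedents of `ρ` (the atom `x →^a` for a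
positive premise `x →^a y`, and its negation for a negative premise). -/
def HypsSat (Tr : Tm Op ar → Act → Tm Op ar → Prop) (σ : ℕ → Tm Op ar)
    (ρ : Rule Op ar Act) : Prop :=
  (∀ ⦃x a y⦄, (x, a, y) ∈ ρ.pos → ∃ q, Tr (σ x) a q) ∧
  (∀ ⦃x a⦄, (x, a) ∈ ρ.neg → ∀ q, ¬ Tr (σ x) a q)

/-- `R` is a rule-matching bisimulation (Definition 5.1). -/
def IsRMBisim (L : Lang Op ar Act) (Tr : Tm Op ar → Act → Tm Op ar → Prop)
    (rul : Tm Op ar → Set (Rule Op ar Act))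
    (R : Tm Op ar → Tm Op ar → Prop) : Prop :=
  Symmetric R ∧
  ∀ P Q, R P Q → ∀ ρ ∈ rul P,
    ∃ J : Set (Rule Op ar Act), J.Finite ∧
      (∀ ρ' ∈ J, IsValidRuloid rul Q ρ') ∧
      (∀ ρ' ∈ J,
        ρ'.act = ρ.act ∧
        R ρ.tgt ρ'.tgt ∧
        (ρ'.targetVars ∪ ρ.targetVars) ∩ (ρ.sourceVars ∪ ρ'.sourceVars) = ∅ ∧
        (∀ y ∈ ρ.targetVars ∩ ρ'.targetVars,
          ∃ x, x ∈ ρ.sourceVars ∩ ρ'.sourceVars ∧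
            ∃ b, (x, b, y) ∈ ρ.pos ∧ (x, b, y) ∈ ρ'.pos)) ∧
      (∀ σ, ClosedSub L.ops σ → HypsSat Tr σ ρ → ∃ ρ' ∈ J, HypsSat Tr σ ρ')

/-- Rule-matching bisimilarity. -/
def RMBisim (L : Lang Op ar Act) (Tr : Tm Op ar → Act → Tm Op ar → Prop)
    (rul : Tm Op ar → Set (Rule Op ar Act)) (P Q : Tm Op ar) : Prop :=
  ∃ R, IsRMBisim L Tr rul R ∧ R P Q

/-- Initial transition formulae: propositional logic over atoms `x →^a`. -/
inductive TF (Act : Type) : Type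
  | tru : TF Act
  | atom : ℕ → Act → TF Act
  | not : TF Act → TF Act
  | and : TF Act → TF Act → TF Act

/-- Satisfaction of an initial transition formula by a substitution. -/
def TF.Sat (Tr : Tm Op ar → Act → Tm Op ar → Prop) (σ : ℕ → Tm Op ar) :
    TF Act → Prop
  | .tru => True
  | .atom x a => ∃ q, Tr (σ x) a q
  | .not F => ¬ TF.Sat Tr σ F
  | .and F F' => TF.Sat Tr σ F ∧ TF.Sat Tr σ F'

/-- Semantic entailment `⊨ F ⇒ F'` over closed `S`-substitutions. -/
def Entails (S : Set Op) (Tr : Tm Op ar → Act → Tm Op ar → Prop)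
    (F F' : TF Act) : Prop :=
  ∀ σ, ClosedSub S σ → TF.Sat Tr σ F → TF.Sat Tr σ F'

/-- `L'` (over operations `Op'`) is a disjoint extension of `L` (over `Op`),
along the arity-preserving injection `ι`: the signature and rules of `L'`
include those of `L`, and `L'` has no new rules for the operations of `L`. -/
def IsDisjointExtension {Op' : Type} {ar' : Op' → ℕ} (ι : Op → Op')
    (h : ∀ f, ar' (ι f) = ar f) (L' : Lang Op' ar' Act) (L : Lang Op ar Act) : Prop :=
  Function.Injective ι ∧
  (∀ f ∈ L.ops, ι f ∈ L'.ops) ∧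
  (∀ ρ ∈ L.rules, ρ.map ι h ∈ L'.rules) ∧
  (∀ ρ' ∈ L'.rules, (∃ f ∈ L.ops, ρ'.PrincipalIs (ι f)) → ∃ ρ ∈ L.rules, ρ' = ρ.map ι h)

/-- The term `f(t, u)` for a binary operation symbol `f`. -/
def binT (f : Op) (t u : Tm Op ar) : Tm Op ar :=
  Tm.app f fun i => if (i : ℕ) = 0 then t else u

/-- The term `f` for a constant symbol `f`. -/
def constT (f : Op) : Tm Op ar := Tm.app f fun _ => Tm.var 0

/-- The term `f(t)` for a unary operation symbol `f`. -/
def unT (f : Op) (t : Tm Op ar) : Tm Op ar := Tm.app f fun _ => t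
section Aux
variable {Op : Type} {ar : Op → ℕ} {Act : Type}

namespace Tm

lemma vars_subst (σ : ℕ → Tm Op ar) (t : Tm Op ar) :
    (t.subst σ).vars = ⋃ v ∈ t.vars, (σ v).vars := by
  induction t with
  | var x => simp [subst, vars]
  | app f ts ih =>
    ext w
    simp only [subst, vars, Set.mem_iUnion] at *
    constructor
    · rintro ⟨i, hi⟩
      rw [ih i] at hi
      simp only [Set.mem_iUnion] at hi
      rcases hi with ⟨v, hv, hw⟩
      exact ⟨v, ⟨i, hv⟩, hw⟩
    · rintro ⟨v, ⟨i, hv⟩, hw⟩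
      refine ⟨i, ?_⟩
      rw [ih i]
      simp only [Set.mem_iUnion]
      exact ⟨v, hv, hw⟩

lemma vars_finite (t : Tm Op ar) : t.vars.Finite := by
  induction t with
  | var x => simp [vars]
  | app f ts ih => exact Set.finite_iUnion ih

lemma ops_subst (σ : ℕ → Tm Op ar) (t : Tm Op ar) :
    (t.subst σ).ops ⊆ t.ops ∪ ⋃ v ∈ t.vars, (σ v).ops := by
  induction t with
  | var x => simp [subst, ops, vars]
  | app f ts ih =>
    intro g hg
    simp only [subst, ops, Set.mem_insert_iff, Set.mem_iUnion] at hg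
    rcases hg with rfl | ⟨i, hi⟩
    · exact Or.inl (by simp [ops])
    · rcases ih i hi with h | h
      · refine Or.inl ?_
        simp only [ops, Set.mem_insert_iff, Set.mem_iUnion]
        exact Or.inr ⟨i, h⟩
      · obtain ⟨v, hv, hg⟩ := Set.mem_iUnion₂.1 h
        refine Or.inr (Set.mem_iUnion₂.2 ⟨v, ?_, hg⟩)
        simp only [vars, Set.mem_iUnion]
        exact ⟨i, hv⟩

lemma subst_subst (σ σ' : ℕ → Tm Op ar) (t : Tm Op ar) :
    (t.subst σ).subst σ' = t.subst (fun v => (σ v).subst σ') := by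
  induction t with
  | var x => simp [subst]
  | app f ts ih => simp only [subst]; exact congrArg _ (funext fun i => ih i)

lemma subst_congr {σ σ' : ℕ → Tm Op ar} {t : Tm Op ar}
    (h : ∀ v ∈ t.vars, σ v = σ' v) : t.subst σ = t.subst σ' := by
  induction t with
  | var x => exact h x (by simp [vars])
  | app f ts ih =>
    simp only [subst]
    exact congrArg _ (funext fun i => ih i fun v hv =>
      h v (by simp only [vars, Set.mem_iUnion]; exact ⟨i, hv⟩))

lemma eq_on_of_subst_eq {σ σ' : ℕ → Tm Op ar} {t : Tm Op ar}
    (h : t.subst σ = t.subst σ') : ∀ v ∈ t.vars, σ v = σ' v := by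
  induction t with
  | var x => intro v hv; rcases hv with rfl; exact h
  | app f ts ih =>
    intro v hv
    simp only [vars, Set.mem_iUnion] at hv
    rcases hv with ⟨i, hv⟩
    simp only [subst] at h
    injection h with h1 h2
    exact ih i (congrFun h2 i) v hv

lemma rename_subst (r : ℕ → ℕ) (σ : ℕ → Tm Op ar) (t : Tm Op ar) :
    (t.rename r).subst σ = t.subst (σ ∘ r) := by
  unfold rename; rw [subst_subst]; rfl

lemma vars_rename (r : ℕ → ℕ) (t : Tm Op ar) :
    (t.rename r).vars = r '' t.vars := by
  unfold rename
  rw [vars_subst]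
  ext w
  simp only [Set.mem_iUnion, vars, Set.mem_image, Set.mem_singleton_iff]
  constructor
  · rintro ⟨v, hv, rfl⟩
    exact ⟨v, hv, rfl⟩
  · rintro ⟨v, hv, rfl⟩
    exact ⟨v, hv, rfl⟩

lemma ops_rename (r : ℕ → ℕ) (t : Tm Op ar) :
    (t.rename r).ops = t.ops := by
  induction t with
  | var x => rfl
  | app f ts ih =>
    simp only [rename, subst, ops] at *
    exact congrArg _ (congrArg _ (funext fun i => ih i))

lemma closed_subst {S : Set Op} {σ : ℕ → Tm Op ar} (hσ : GSOSPaper.ClosedSub S σ)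
    (t : Tm Op ar) : (t.subst σ).IsClosed := by
  unfold IsClosed
  rw [vars_subst]
  ext w
  simp only [Set.mem_iUnion, Set.mem_empty_iff_false, iff_false, not_exists]
  intro v hv hw
  have := (hσ v).1
  rw [IsClosed] at this
  rw [this] at hw
  exact hw

lemma ops_subst_subset {S : Set Op} {σ : ℕ → Tm Op ar} (hσ : GSOSPaper.ClosedSub S σ)
    {t : Tm Op ar} (ht : t.ops ⊆ S) : (t.subst σ).ops ⊆ S := by
  refine (ops_subst σ t).trans ?_
  refine Set.union_subset ht ?_
  simp only [Set.iUnion_subset_iff]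
  exact fun v _ => (hσ v).2

/-- Finiteness of the set of substitution instances with values in a finite pool. -/
lemma finite_subst_pool (t : Tm Op ar) {F : Set (Tm Op ar)} (hF : F.Finite) :
    {s | ∃ τ, (∀ v ∈ t.vars, τ v ∈ F) ∧ s = t.subst τ}.Finite := by
  induction t with
  | var x =>
    refine hF.subset ?_
    rintro s ⟨τ, hτ, rfl⟩
    exact hτ x (by simp [vars])
  | app f ts ih =>
    have hpi : (Set.pi Set.univ (fun i => {s | ∃ τ, (∀ v ∈ (ts i).vars, τ v ∈ F) ∧ s = (ts i).subst τ})).Finite :=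
      Set.Finite.pi fun i => ih i
    refine ((hpi.image (fun g => Tm.app f g)).subset ?_)
    rintro s ⟨τ, hτ, rfl⟩
    refine ⟨fun i => (ts i).subst τ, ?_, rfl⟩
    intro i _
    exact ⟨τ, fun v hv => hτ v (by simp only [vars, Set.mem_iUnion]; exact ⟨i, hv⟩), rfl⟩

end Tm

lemma Rule.targetVars_finite {ρ : Rule Op ar Act} (h : ρ.pos.Finite) :
    ρ.targetVars.Finite := by
  have : ρ.targetVars ⊆ (fun p : ℕ × Act × ℕ => p.2.2) '' ρ.pos := by
    rintro y ⟨x, a, hxa⟩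
    exact ⟨(x, a, y), hxa, rfl⟩
  exact (h.image _).subset this

/-- Targets of transitions are closed terms over the signature. -/
lemma tr_target {L : Lang Op ar Act} (hL : L.WellFormed)
    {Tr : Tm Op ar → Act → Tm Op ar → Prop} (hTr : IsTransRel L Tr)
    {p : Tm Op ar} {a : Act} {q : Tm Op ar} (h : Tr p a q) :
    q.IsClosed ∧ q.ops ⊆ L.ops := by
  obtain ⟨ρ, hρ, σ, hσ, _, _, _, hq⟩ := hTr.2 p a q h
  subst hq
  exact ⟨Tm.closed_subst hσ _, Tm.ops_subst_subset hσ (hL.2.2 ρ hρ).2.2⟩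

end Aux
namespace RT
open scoped Classical

variable {Op : Type} {ar : Op → ℕ} {Act : Type}

/-- Index type for fresh variables. -/
abbrev FIdx (Act : Type) : Type := ((ℕ × Act × ℕ) × ℕ) ⊕ ((ℕ × Act) × ℕ)

/-- Renaming of the target variables of a sub-ruloid chosen for premise `p`. -/
noncomputable def rnm (fr : FIdx Act → ℕ) (p : ℕ × Act × ℕ) (θp : Rule Op ar Act) : ℕ → ℕ :=
  fun v => if v ∈ θp.targetVars then fr (.inl (p, v)) else v

/-- The substitution building the target of the composite ruloid. -/
noncomputable def tauC {f : Op} (ts : Fin (ar f) → Tm Op ar) (fr : FIdx Act → ℕ)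
    (ρ : Rule Op ar Act) (xf : Fin (ar f) → ℕ)
    (θ : ℕ × Act × ℕ → Rule Op ar Act) : ℕ → Tm Op ar :=
  fun v =>
    if h : ∃ i, xf i = v then ts h.choose
    else if h2 : ∃ p, p ∈ ρ.pos ∧ p.2.2 = v then
      ((θ h2.choose).tgt.rename (rnm fr h2.choose (θ h2.choose)))
    else Tm.var v

/-- The composite ruloid obtained from a rule `ρ`, a choice `θ` of sub-ruloids
for the positive premises and a choice `d` of denial literals for the negative
premises. -/
noncomputable def composite {f : Op} (ts : Fin (ar f) → Tm Op ar) (c : Act)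
    (R0 : Fin (ar f) → Act → Set (Rule Op ar Act)) (fr : FIdx Act → ℕ)
    (codeR : Rule Op ar Act → ℕ)
    (ρ : Rule Op ar Act) (xf : Fin (ar f) → ℕ)
    (θ : ℕ × Act × ℕ → Rule Op ar Act)
    (d : (ℕ × Act) × Rule Op ar Act → (ℕ × Act × ℕ) ⊕ (ℕ × Act)) : Rule Op ar Act where
  pos := (⋃ p ∈ ρ.pos, ((θ p).rename (rnm fr p (θ p))).pos) ∪
    {q | ∃ n ∈ ρ.neg, ∃ i, xf i = n.1 ∧ ∃ ρ' ∈ R0 i n.2, ∃ m,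
      d (n, ρ') = .inr m ∧ q = (m.1, m.2, fr (.inr (n, codeR ρ')))}
  neg := (⋃ p ∈ ρ.pos, ((θ p).rename (rnm fr p (θ p))).neg) ∪
    {q | ∃ n ∈ ρ.neg, ∃ i, xf i = n.1 ∧ ∃ ρ' ∈ R0 i n.2, ∃ m,
      d (n, ρ') = .inl m ∧ q = (m.1, m.2.1)}
  src := Tm.app f ts
  act := c
  tgt := ρ.tgt.subst (tauC ts fr ρ xf θ)

/-- The candidate ruloid set for the context `app f ts` and action `c`. -/
def RD {f : Op} (ts : Fin (ar f) → Tm Op ar) (c : Act)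
    (R0 : Fin (ar f) → Act → Set (Rule Op ar Act)) (fr : FIdx Act → ℕ)
    (codeR : Rule Op ar Act → ℕ) (L : Lang Op ar Act) : Set (Rule Op ar Act) :=
  {χ | ∃ ρ ∈ L.rules, ∃ xf : Fin (ar f) → ℕ, Function.Injective xf ∧
      ρ.src = Tm.app f (fun i => Tm.var (xf i)) ∧ ρ.act = c ∧
      ∃ θ d,
        (∀ p ∈ ρ.pos, ∃ i, xf i = p.1 ∧ θ p ∈ R0 i p.2.1) ∧
        (∀ n ∈ ρ.neg, ∀ i, xf i = n.1 → ∀ ρ' ∈ R0 i n.2,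
          (∃ m ∈ ρ'.pos, d (n, ρ') = .inl m) ∨ (∃ m ∈ ρ'.neg, d (n, ρ') = .inr m)) ∧
        χ = composite ts c R0 fr codeR ρ xf θ d}

section Lemmas

variable {f : Op} {ts : Fin (ar f) → Tm Op ar} {c : Act}
  {R0 : Fin (ar f) → Act → Set (Rule Op ar Act)} {fr : FIdx Act → ℕ}
  {codeR : Rule Op ar Act → ℕ} {L : Lang Op ar Act}
  {Tr : Tm Op ar → Act → Tm Op ar → Prop} {X : Set ℕ}

lemma src_tgt_disjoint {ρ : Rule Op ar Act} (h : ρ.WF) :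
    ∀ v ∈ ρ.sourceVars, v ∉ ρ.targetVars := by
  rintro v hv ⟨x, a, hxa⟩
  exact (h.2.2.1 hxa).2 hv

lemma vars_varapp (xf : Fin (ar f) → ℕ) :
    (Tm.app f (fun i => Tm.var (xf i))).vars = Set.range xf := by
  ext w; simp [Tm.vars]

lemma rnm_src {θp : Rule Op ar Act} (hWF : θp.WF) {v : ℕ} (hv : v ∈ θp.sourceVars) :
    rnm (Act := Act) fr p θp v = v := by
  unfold rnm
  rw [if_neg (src_tgt_disjoint hWF v hv)]

lemma rnm_tgt {θp : Rule Op ar Act} {p : ℕ × Act × ℕ} {v : ℕ} (hv : v ∈ θp.targetVars) :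
    rnm (Act := Act) fr p θp v = fr (.inl (p, v)) := by
  unfold rnm
  rw [if_pos hv]

lemma tauC_eq_ts {ρ : Rule Op ar Act} {xf : Fin (ar f) → ℕ}
    {θ : ℕ × Act × ℕ → Rule Op ar Act} (hxf : Function.Injective xf) (i : Fin (ar f)) :
    tauC ts fr ρ xf θ (xf i) = ts i := by
  unfold tauC
  rw [dif_pos ⟨i, rfl⟩]
  congr 1
  exact hxf (⟨i, rfl⟩ : ∃ j, xf j = xf i).choose_spec

lemma tauC_eq_tgt {ρ : Rule Op ar Act} {xf : Fin (ar f) → ℕ}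
    {θ : ℕ × Act × ℕ → Rule Op ar Act} (hWF : ρ.WF)
    {p : ℕ × Act × ℕ} (hp : p ∈ ρ.pos) (hnr : ¬ ∃ i, xf i = p.2.2) :
    tauC ts fr ρ xf θ p.2.2 = (θ p).tgt.rename (rnm fr p (θ p)) := by
  unfold tauC
  rw [dif_neg hnr, dif_pos ⟨p, hp, rfl⟩]
  have hspec := (⟨p, hp, rfl⟩ : ∃ p', p' ∈ ρ.pos ∧ p'.2.2 = p.2.2).choose_spec
  set p' := (⟨p, hp, rfl⟩ : ∃ p', p' ∈ ρ.pos ∧ p'.2.2 = p.2.2).choose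
  have hp' : p' = p := by
    have h1 : (p'.1, p'.2.1, p'.2.2) ∈ ρ.pos := by
      simpa using hspec.1
    have h2 : (p.1, p.2.1, p.2.2) ∈ ρ.pos := by simpa using hp
    rw [hspec.2] at h1
    obtain ⟨hx, ha⟩ := hWF.2.2.2.2.1 h1 h2
    exact Prod.ext hx (Prod.ext ha hspec.2)
  rw [hp']

lemma satisfies_of_rename {σ : ℕ → Tm Op ar} {r : ℕ → ℕ} {θp χ : Rule Op ar Act}
    (hpos : (θp.rename r).pos ⊆ χ.pos) (hneg : (θp.rename r).neg ⊆ χ.neg)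
    (h : Satisfies Tr σ χ) : Satisfies Tr (σ ∘ r) θp := by
  constructor
  · intro x a y hxy
    exact h.1 (hpos ⟨(x, a, y), hxy, rfl⟩)
  · intro x a hx q
    exact h.2 (hneg ⟨(x, a), hx, rfl⟩) q

end Lemmas
end RT
namespace RT
open scoped Classical
variable {Op : Type} {ar : Op → ℕ} {Act : Type}

section Lemmas
variable [Finite Act]
variable {f : Op} {ts : Fin (ar f) → Tm Op ar} {c : Act}
  {R0 : Fin (ar f) → Act → Set (Rule Op ar Act)} {fr : FIdx Act → ℕ}
  {codeR : Rule Op ar Act → ℕ} {L : Lang Op ar Act}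
  {Tr : Tm Op ar → Act → Tm Op ar → Prop} {X : Set ℕ}

/-- All the hypotheses needed about the ambient data. -/
structure Ctx (ts : Fin (ar f) → Tm Op ar)
    (R0 : Fin (ar f) → Act → Set (Rule Op ar Act)) (fr : FIdx Act → ℕ)
    (codeR : Rule Op ar Act → ℕ) (L : Lang Op ar Act)
    (Tr : Tm Op ar → Act → Tm Op ar → Prop) (X : Set ℕ) : Prop where
  hL : L.WellFormed
  hTr : IsTransRel L Tr
  hD : (Tm.app f ts).ops ⊆ L.ops
  hR0fin : ∀ i a, (R0 i a).Finite
  hR0r : ∀ i a, ∀ θp ∈ R0 i a, IsRuloidFor L.ops θp (ts i) ∧ θp.act = a ∧ θp.Sound Tr L.ops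
  hR0s : ∀ i a, SupportingFor Tr L.ops (R0 i a) (ts i) a
  hfr1 : Function.Injective fr
  hfr2 : ∀ k, fr k ∉ X ∪ (Tm.app f ts).vars
  hcode : Set.InjOn codeR (⋃ i, ⋃ a, R0 i a)

variable (C : Ctx ts R0 fr codeR L Tr X)
set_option linter.unusedSectionVars false
set_option linter.unusedVariables false

lemma decode_inr (C : Ctx ts R0 fr codeR L Tr X)
    {ρ : Rule Op ar Act} {xf : Fin (ar f) → ℕ}
    {d : (ℕ × Act) × Rule Op ar Act → (ℕ × Act × ℕ) ⊕ (ℕ × Act)}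
    (cd : ∀ n ∈ ρ.neg, ∀ i, xf i = n.1 → ∀ ρ' ∈ R0 i n.2,
      (∃ m ∈ ρ'.pos, d (n, ρ') = .inl m) ∨ (∃ m ∈ ρ'.neg, d (n, ρ') = .inr m))
    {n : ℕ × Act} (hn : n ∈ ρ.neg) {i : Fin (ar f)} (hi : xf i = n.1)
    {ρ' : Rule Op ar Act} (hρ' : ρ' ∈ R0 i n.2) {m : ℕ × Act}
    (hd : d (n, ρ') = .inr m) : m ∈ ρ'.neg := by
  rcases cd n hn i hi ρ' hρ' with ⟨m', _, hd'⟩ | ⟨m', hm', hd'⟩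
  · rw [hd'] at hd; exact absurd hd (by simp)
  · rw [hd'] at hd
    injection hd with h
    exact h ▸ hm'

lemma decode_inl (C : Ctx ts R0 fr codeR L Tr X)
    {ρ : Rule Op ar Act} {xf : Fin (ar f) → ℕ}
    {d : (ℕ × Act) × Rule Op ar Act → (ℕ × Act × ℕ) ⊕ (ℕ × Act)}
    (cd : ∀ n ∈ ρ.neg, ∀ i, xf i = n.1 → ∀ ρ' ∈ R0 i n.2,
      (∃ m ∈ ρ'.pos, d (n, ρ') = .inl m) ∨ (∃ m ∈ ρ'.neg, d (n, ρ') = .inr m))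
    {n : ℕ × Act} (hn : n ∈ ρ.neg) {i : Fin (ar f)} (hi : xf i = n.1)
    {ρ' : Rule Op ar Act} (hρ' : ρ' ∈ R0 i n.2) {m : ℕ × Act × ℕ}
    (hd : d (n, ρ') = .inl m) : m ∈ ρ'.pos := by
  rcases cd n hn i hi ρ' hρ' with ⟨m', hm', hd'⟩ | ⟨m', _, hd'⟩
  · rw [hd'] at hd
    injection hd with h
    exact h ▸ hm'
  · rw [hd'] at hd; exact absurd hd.symm (by simp)

lemma mem_RD_spec (C : Ctx ts R0 fr codeR L Tr X) :
    ∀ χ ∈ RD ts c R0 fr codeR L, IsRuloidFor L.ops χ (Tm.app f ts) ∧ χ.act = c ∧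
      χ.targetVars ∩ X = ∅ := by
  rintro χ ⟨ρ, hρ, xf, hxf, hsrc, hact, θ, d, cpos, cd, rfl⟩
  have hρWF : ρ.WF := (C.hL.2.2 ρ hρ).1.1
  have hsv : ρ.sourceVars = Set.range xf := by
    rw [Rule.sourceVars, hsrc, vars_varapp]
  -- facts about chosen sub-ruloids
  have hθ : ∀ p ∈ ρ.pos, ∃ i, xf i = p.1 ∧ (θ p).WF ∧ (θ p).src = ts i ∧
      (θ p).tgt.ops ⊆ L.ops := by
    intro p hp
    obtain ⟨i, hi, hmem⟩ := cpos p hp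
    obtain ⟨⟨h1, h2, h3⟩, _, _⟩ := C.hR0r i p.2.1 (θ p) hmem
    exact ⟨i, hi, h1, h2, h3⟩
  set χ := composite ts c R0 fr codeR ρ xf θ d with hχ
  have hsvχ : χ.sourceVars = (Tm.app f ts).vars := rfl
  have htsD : ∀ i, (ts i).vars ⊆ (Tm.app f ts).vars := by
    intro i v hv
    simp only [Tm.vars, Set.mem_iUnion]
    exact ⟨i, hv⟩
  have hfrD : ∀ k, fr k ∉ (Tm.app f ts).vars := fun k hk => C.hfr2 k (Or.inr hk)
  have hfrX : ∀ k, fr k ∉ X := fun k hk => C.hfr2 k (Or.inl hk)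
  -- description of χ.pos elements
  have hposchar : ∀ q ∈ χ.pos,
      (∃ p ∈ ρ.pos, ∃ m ∈ (θ p).pos, q = (m.1, m.2.1, fr (.inl (p, m.2.2)))
        ∧ q.1 ∈ (Tm.app f ts).vars) ∨
      (∃ n ∈ ρ.neg, ∃ i, xf i = n.1 ∧ ∃ ρ' ∈ R0 i n.2, ∃ m, d (n, ρ') = .inr m ∧
        q = (m.1, m.2, fr (.inr (n, codeR ρ'))) ∧ q.1 ∈ (Tm.app f ts).vars) := by
    rintro q hq
    rcases hq with hq | hq
    · obtain ⟨p, hp, m, hm, rfl⟩ := by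
        simpa only [Set.mem_iUnion, Rule.rename, Set.mem_image] using hq
      obtain ⟨i, hi, hWFθ, hsrcθ, _⟩ := hθ p hp
      have hm' : (m.1, m.2.1, m.2.2) ∈ (θ p).pos := by simpa using hm
      have hx : m.1 ∈ (θ p).sourceVars := (hWFθ.2.2.1 hm').1
      have hy : m.2.2 ∈ (θ p).targetVars := ⟨m.1, m.2.1, hm'⟩
      refine Or.inl ⟨p, hp, m, hm, ?_, ?_⟩
      · simp only [rnm_src hWFθ hx, rnm_tgt hy]
      · simp only [rnm_src hWFθ hx]
        refine htsD i ?_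
        rw [Rule.sourceVars, hsrcθ] at hx
        exact hx
    · obtain ⟨n, hn, i, hi, ρ', hρ', m, hd, rfl⟩ := hq
      have hm : m ∈ ρ'.neg := decode_inr C cd hn hi hρ' hd
      have hWFρ' : ρ'.WF := ((C.hR0r i n.2 ρ' hρ').1).1
      have hsrcρ' : ρ'.src = ts i := ((C.hR0r i n.2 ρ' hρ').1).2.1
      refine Or.inr ⟨n, hn, i, hi, ρ', hρ', m, hd, rfl, ?_⟩
      have := hWFρ'.2.2.2.1 (show (m.1, m.2) ∈ ρ'.neg by simpa using hm)
      rw [Rule.sourceVars, hsrcρ'] at this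
      exact htsD i this
  -- targets lie in the range of fr
  have htgtchar : ∀ y ∈ χ.targetVars, ∃ k, y = fr k := by
    rintro y ⟨x, a, hxa⟩
    rcases hposchar _ hxa with ⟨p, _, m, _, he, _⟩ | ⟨n, _, i, _, ρ', _, m, _, he, _⟩
    · exact ⟨_, (congrArg (fun z => z.2.2) he : _)⟩
    · exact ⟨_, (congrArg (fun z => z.2.2) he : _)⟩
  have hnegchar : ∀ q ∈ χ.neg, q.1 ∈ (Tm.app f ts).vars := by
    rintro q hq
    rcases hq with hq | hq
    · obtain ⟨p, hp, m, hm, rfl⟩ := by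
        simpa only [Set.mem_iUnion, Rule.rename, Set.mem_image] using hq
      obtain ⟨i, hi, hWFθ, hsrcθ, _⟩ := hθ p hp
      have hx : m.1 ∈ (θ p).sourceVars := hWFθ.2.2.2.1 (show (m.1, m.2) ∈ (θ p).neg by simpa using hm)
      simp only [rnm_src hWFθ hx]
      refine htsD i ?_
      rw [Rule.sourceVars, hsrcθ] at hx
      exact hx
    · obtain ⟨n, hn, i, hi, ρ', hρ', m, hd, rfl⟩ := hq
      have hm : m ∈ ρ'.pos := decode_inl C cd hn hi hρ' hd
      have hWFρ' : ρ'.WF := ((C.hR0r i n.2 ρ' hρ').1).1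
      have hsrcρ' : ρ'.src = ts i := ((C.hR0r i n.2 ρ' hρ').1).2.1
      have hx : m.1 ∈ ρ'.sourceVars :=
        (hWFρ'.2.2.1 (show (m.1, m.2.1, m.2.2) ∈ ρ'.pos by simpa using hm)).1
      rw [Rule.sourceVars, hsrcρ'] at hx
      exact htsD i hx
  have hAll : (⋃ i, ⋃ a, R0 i a).Finite :=
    Set.finite_iUnion fun i => Set.finite_iUnion fun a => C.hR0fin i a
  refine ⟨⟨⟨?_, ?_, ?_, ?_, ?_, ?_⟩, rfl, ?_⟩, rfl, ?_⟩
  · -- pos finite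
    refine Set.Finite.union ?_ ?_
    · refine Set.Finite.biUnion hρWF.1 (fun p hp => ?_)
      obtain ⟨i, hi, hWFθ, _⟩ := hθ p hp
      exact hWFθ.1.image _
    · refine ((hρWF.2.1.prod hAll).image (fun z : (ℕ × Act) × Rule Op ar Act =>
        match d z with
        | .inr m => (m.1, m.2, fr (.inr (z.1, codeR z.2)))
        | .inl _ => (0, z.1.2, 0))).subset ?_
      rintro q ⟨n, hn, i, hi, ρ', hρ', m, hd, rfl⟩
      refine ⟨(n, ρ'), ⟨hn, Set.mem_iUnion.2 ⟨i, Set.mem_iUnion.2 ⟨n.2, hρ'⟩⟩⟩, ?_⟩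
      simp only [hd]
  · -- neg finite
    refine Set.Finite.union ?_ ?_
    · refine Set.Finite.biUnion hρWF.1 (fun p hp => ?_)
      obtain ⟨i, hi, hWFθ, _⟩ := hθ p hp
      exact hWFθ.2.1.image _
    · refine ((hρWF.2.1.prod hAll).image (fun z : (ℕ × Act) × Rule Op ar Act =>
        match d z with
        | .inl m => (m.1, m.2.1)
        | .inr _ => (0, z.1.2))).subset ?_
      rintro q ⟨n, hn, i, hi, ρ', hρ', m, hd, rfl⟩
      refine ⟨(n, ρ'), ⟨hn, Set.mem_iUnion.2 ⟨i, Set.mem_iUnion.2 ⟨n.2, hρ'⟩⟩⟩, ?_⟩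
      simp only [hd]
  · -- pos premises respect source/target vars
    intro x a y hxy
    have h1 : x ∈ (Tm.app f ts).vars ∧ ∃ k, y = fr k := by
      rcases hposchar _ hxy with ⟨p, _, m, _, he, hq1⟩ | ⟨n, _, i, _, ρ', _, m, _, he, hq1⟩ <;>
        exact ⟨hq1, _, congrArg (fun z : ℕ × Act × ℕ => z.2.2) he⟩
    obtain ⟨k, rfl⟩ := h1.2
    exact ⟨h1.1, hfrD k⟩
  · -- neg premises lhs in source vars
    intro x a hx
    exact hnegchar _ hx
  · -- uniqueness of targets
    intro x a y x' a' h1 h2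
    rcases hposchar _ h1 with ⟨p, hp, m, hm, he, _⟩ | ⟨n, hn, i, hi, ρ', hρ', m, hd, he, _⟩ <;>
      rcases hposchar _ h2 with ⟨p2, hp2, m2, hm2, he2, _⟩ | ⟨n2, hn2, i2, hi2, ρ2, hρ2, m2, hd2, he2, _⟩
    · obtain ⟨rfl, rfl, hy⟩ : x = m.1 ∧ a = m.2.1 ∧ y = fr (.inl (p, m.2.2)) := by
        simpa [Prod.ext_iff] using he
      obtain ⟨rfl, rfl, hy2⟩ : x' = m2.1 ∧ a' = m2.2.1 ∧ y = fr (.inl (p2, m2.2.2)) := by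
        simpa [Prod.ext_iff] using he2
      have := C.hfr1 (hy ▸ hy2 : fr (.inl (p, m.2.2)) = fr (.inl (p2, m2.2.2)))
      obtain ⟨rfl, htgt⟩ : p = p2 ∧ m.2.2 = m2.2.2 := by simpa [Prod.ext_iff] using this
      obtain ⟨i, hi, hWFθ, _⟩ := hθ p hp
      have u1 : (m.1, m.2.1, m.2.2) ∈ (θ p).pos := by simpa using hm
      have u2 : (m2.1, m2.2.1, m.2.2) ∈ (θ p).pos := by rw [htgt]; simpa using hm2
      exact hWFθ.2.2.2.2.1 u1 u2
    · obtain ⟨rfl, rfl, hy⟩ : x = m.1 ∧ a = m.2.1 ∧ y = fr (.inl (p, m.2.2)) := by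
        simpa [Prod.ext_iff] using he
      obtain ⟨rfl, rfl, hy2⟩ : x' = m2.1 ∧ a' = m2.2 ∧ y = fr (.inr (n2, codeR ρ2)) := by
        simpa [Prod.ext_iff] using he2
      exact absurd (C.hfr1 (hy ▸ hy2)) (by simp)
    · obtain ⟨rfl, rfl, hy⟩ : x = m.1 ∧ a = m.2 ∧ y = fr (.inr (n, codeR ρ')) := by
        simpa [Prod.ext_iff] using he
      obtain ⟨rfl, rfl, hy2⟩ : x' = m2.1 ∧ a' = m2.2.1 ∧ y = fr (.inl (p2, m2.2.2)) := by
        simpa [Prod.ext_iff] using he2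
      exact absurd (C.hfr1 (hy ▸ hy2)) (by simp)
    · obtain ⟨rfl, rfl, hy⟩ : x = m.1 ∧ a = m.2 ∧ y = fr (.inr (n, codeR ρ')) := by
        simpa [Prod.ext_iff] using he
      obtain ⟨rfl, rfl, hy2⟩ : x' = m2.1 ∧ a' = m2.2 ∧ y = fr (.inr (n2, codeR ρ2)) := by
        simpa [Prod.ext_iff] using he2
      have := C.hfr1 (hy ▸ hy2 : fr (.inr (n, codeR ρ')) = fr (.inr (n2, codeR ρ2)))
      obtain ⟨rfl, hcd⟩ : n = n2 ∧ codeR ρ' = codeR ρ2 := by simpa [Prod.ext_iff] using this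
      have hmem1 : ρ' ∈ ⋃ i, ⋃ a, R0 i a := Set.mem_iUnion.2 ⟨i, Set.mem_iUnion.2 ⟨n.2, hρ'⟩⟩
      have hmem2 : ρ2 ∈ ⋃ i, ⋃ a, R0 i a := Set.mem_iUnion.2 ⟨i2, Set.mem_iUnion.2 ⟨n.2, hρ2⟩⟩
      have hρeq : ρ' = ρ2 := C.hcode hmem1 hmem2 hcd
      subst hρeq
      rw [hd] at hd2
      injection hd2 with h
      subst h
      exact ⟨rfl, rfl⟩
  · -- tgt vars
    intro v hv
    rw [show (composite ts c R0 fr codeR ρ xf θ d).tgt = ρ.tgt.subst (tauC ts fr ρ xf θ) from rfl,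
      Tm.vars_subst] at hv
    obtain ⟨w, hw, hv⟩ := Set.mem_iUnion₂.1 hv
    by_cases h : ∃ i, xf i = w
    · rw [show tauC ts fr ρ xf θ w = ts h.choose from by unfold tauC; rw [dif_pos h]] at hv
      exact Or.inl (htsD _ hv)
    · have hwt : w ∈ ρ.targetVars := by
        rcases hρWF.2.2.2.2.2 hw with hws | hwt
        · rw [hsv] at hws; exact absurd hws h
        · exact hwt
      obtain ⟨x0, a0, hx0⟩ := hwt
      have hp : ((x0, a0, w) : ℕ × Act × ℕ) ∈ ρ.pos := hx0
      rw [show tauC ts fr ρ xf θ w = (θ (x0,a0,w)).tgt.rename (rnm fr (x0,a0,w) (θ (x0,a0,w))) from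
        tauC_eq_tgt hρWF hp h] at hv
      rw [Tm.vars_rename] at hv
      obtain ⟨w0, hw0, rfl⟩ := hv
      obtain ⟨i, hi, hWFθ, hsrcθ, _⟩ := hθ _ hp
      by_cases hwt0 : w0 ∈ (θ (x0,a0,w)).targetVars
      · refine Or.inr ?_
        obtain ⟨x1, a1, hx1⟩ := hwt0
        refine ⟨rnm fr (x0,a0,w) (θ (x0,a0,w)) x1, a1, Or.inl ?_⟩
        refine Set.mem_iUnion₂.2 ⟨(x0,a0,w), hp, ?_⟩
        exact ⟨(x1, a1, w0), hx1, rfl⟩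
      · rcases hWFθ.2.2.2.2.2 hw0 with hws | hwt'
        · rw [rnm_src hWFθ hws]
          refine Or.inl (htsD i ?_)
          rw [Rule.sourceVars, hsrcθ] at hws
          exact hws
        · exact absurd hwt' hwt0
  · -- tgt ops
    refine (Tm.ops_subst _ _).trans (Set.union_subset ((C.hL.2.2 ρ hρ).2.2) ?_)
    simp only [Set.iUnion_subset_iff]
    intro w hw
    have hopsts : ∀ j, (ts j).ops ⊆ L.ops := by
      intro j g hg
      refine C.hD ?_
      simp only [Tm.ops, Set.mem_insert_iff, Set.mem_iUnion]
      exact Or.inr ⟨j, hg⟩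
    by_cases h : ∃ i, xf i = w
    · rw [show tauC ts fr ρ xf θ w = ts h.choose from by unfold tauC; rw [dif_pos h]]
      exact hopsts _
    · by_cases h2 : ∃ p, p ∈ ρ.pos ∧ p.2.2 = w
      · rw [show tauC ts fr ρ xf θ w =
            (θ h2.choose).tgt.rename (rnm fr h2.choose (θ h2.choose)) from by
          unfold tauC; rw [dif_neg h, dif_pos h2]]
        rw [Tm.ops_rename]
        obtain ⟨i, hi, _, _, hops⟩ := hθ _ h2.choose_spec.1
        exact hops
      · rw [show tauC ts fr ρ xf θ w = Tm.var w from by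
          unfold tauC; rw [dif_neg h, dif_neg h2]]
        intro g hg
        simp [Tm.ops] at hg
  · ext y
    simp only [Set.mem_inter_iff, Set.mem_empty_iff_false, iff_false, not_and]
    intro hy hyX
    obtain ⟨k, rfl⟩ := htgtchar y hy
    exact hfrX k hyX

end Lemmas
end RT
namespace RT
open scoped Classical
variable {Op : Type} {ar : Op → ℕ} {Act : Type}

section Sound
variable [Finite Act]
variable {f : Op} {ts : Fin (ar f) → Tm Op ar} {c : Act}
  {R0 : Fin (ar f) → Act → Set (Rule Op ar Act)} {fr : FIdx Act → ℕ}
  {codeR : Rule Op ar Act → ℕ} {L : Lang Op ar Act}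
  {Tr : Tm Op ar → Act → Tm Op ar → Prop} {X : Set ℕ}
set_option linter.unusedSectionVars false

lemma sound_RD (C : Ctx ts R0 fr codeR L Tr X) :
    ∀ χ ∈ RD ts c R0 fr codeR L, χ.Sound Tr L.ops := by
  rintro χ ⟨ρ, hρ, xf, hxf, hsrc, hact, θ, d, cpos, cd, rfl⟩ σ hσ hsat
  have hρWF : ρ.WF := (C.hL.2.2 ρ hρ).1.1
  have hsv : ρ.sourceVars = Set.range xf := by
    rw [Rule.sourceVars, hsrc, vars_varapp]
  have hopsts : ∀ j, (ts j).ops ⊆ L.ops := by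
    intro j g hg
    refine C.hD ?_
    simp only [Tm.ops, Set.mem_insert_iff, Set.mem_iUnion]
    exact Or.inr ⟨j, hg⟩
  set χ := composite ts c R0 fr codeR ρ xf θ d with hχ
  set τ := tauC ts fr ρ xf θ with hτ
  -- facts about chosen sub-ruloids
  have hθs : ∀ p ∈ ρ.pos, ∃ i, xf i = p.1 ∧ (θ p).WF ∧ (θ p).src = ts i ∧
      (θ p).tgt.ops ⊆ L.ops ∧ (θ p).act = p.2.1 ∧ (θ p).Sound Tr L.ops := by
    intro p hp
    obtain ⟨i, hi, hmem⟩ := cpos p hp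
    obtain ⟨⟨h1, h2, h3⟩, h4, h5⟩ := C.hR0r i p.2.1 (θ p) hmem
    exact ⟨i, hi, h1, h2, h3, h4, h5⟩
  -- satisfaction transfers to the chosen sub-ruloids
  have hsatθ : ∀ p ∈ ρ.pos, Satisfies Tr (σ ∘ rnm fr p (θ p)) (θ p) := by
    intro p hp
    refine satisfies_of_rename ?_ ?_ hsat
    · intro q hq
      exact Or.inl (Set.mem_iUnion₂.2 ⟨p, hp, hq⟩)
    · intro q hq
      exact Or.inl (Set.mem_iUnion₂.2 ⟨p, hp, hq⟩)
  -- the rule substitution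
  have hτ'c : ClosedSub L.ops (fun v => (τ v).subst σ) := by
    intro v
    refine ⟨Tm.closed_subst hσ _, Tm.ops_subst_subset hσ ?_⟩
    by_cases h : ∃ i, xf i = v
    · rw [show τ v = ts h.choose from by rw [hτ]; unfold tauC; rw [dif_pos h]]
      exact hopsts _
    · by_cases h2 : ∃ p, p ∈ ρ.pos ∧ p.2.2 = v
      · rw [show τ v = (θ h2.choose).tgt.rename (rnm fr h2.choose (θ h2.choose)) from by
          rw [hτ]; unfold tauC; rw [dif_neg h, dif_pos h2]]
        rw [Tm.ops_rename]
        obtain ⟨i, hi, _, _, hops, _⟩ := hθs _ h2.choose_spec.1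
        exact hops
      · rw [show τ v = Tm.var v from by rw [hτ]; unfold tauC; rw [dif_neg h, dif_neg h2]]
        intro g hg
        simp [Tm.ops] at hg
  have hτ'sat : Satisfies Tr (fun v => (τ v).subst σ) ρ := by
    constructor
    · -- positive premises of ρ
      intro x a y hxy
      obtain ⟨i, hi, hWFθ, hsrcθ, hops, hactθ, hsound⟩ := hθs (x, a, y) hxy
      have h1 := hsound (σ ∘ rnm fr (x,a,y) (θ (x,a,y))) (fun v => hσ _) (hsatθ _ hxy)
      -- source rewriting
      have hsrceq : (θ (x,a,y)).src.subst (σ ∘ rnm fr (x,a,y) (θ (x,a,y))) = (ts i).subst σ := by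
        rw [hsrcθ]
        refine Tm.subst_congr ?_
        intro v hv
        have hv' : v ∈ (θ (x,a,y)).sourceVars := by rw [Rule.sourceVars, hsrcθ]; exact hv
        simp only [Function.comp_apply, rnm_src hWFθ hv']
      have htgteq : (θ (x,a,y)).tgt.subst (σ ∘ rnm fr (x,a,y) (θ (x,a,y))) =
          ((θ (x,a,y)).tgt.rename (rnm fr (x,a,y) (θ (x,a,y)))).subst σ := by
        rw [Tm.rename_subst]
      rw [hsrceq, htgteq, hactθ] at h1
      -- now rewrite the goal
      have hxv : (fun v => (τ v).subst σ) x = (ts i).subst σ := by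
        have hi' : xf i = x := hi
        have h : τ x = ts i := by rw [← hi']; exact tauC_eq_ts hxf i
        show (τ x).subst σ = (ts i).subst σ
        rw [h]
      have hyv : (fun v => (τ v).subst σ) y =
          ((θ (x,a,y)).tgt.rename (rnm fr (x,a,y) (θ (x,a,y)))).subst σ := by
        have hynr : ¬ ∃ j, xf j = y := by
          rintro ⟨j, hj⟩
          have : y ∈ ρ.sourceVars := by rw [hsv]; exact ⟨j, hj⟩
          exact src_tgt_disjoint hρWF y this ⟨x, a, hxy⟩
        have h : τ y = (θ (x,a,y)).tgt.rename (rnm fr (x,a,y) (θ (x,a,y))) :=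
          tauC_eq_tgt hρWF hxy hynr
        show (τ y).subst σ = _
        rw [h]
      rw [hxv, hyv]
      exact h1
    · -- negative premises of ρ
      intro x b hxb q hq
      have hx : x ∈ ρ.sourceVars := hρWF.2.2.2.1 hxb
      rw [hsv] at hx
      obtain ⟨i, hi⟩ := hx
      have hτx : τ x = ts i := by rw [← hi]; exact tauC_eq_ts hxf i
      have hq : Tr ((ts i).subst σ) b q := by
        have hh : (fun v => (τ v).subst σ) x = (ts i).subst σ := by
          show (τ x).subst σ = _
          rw [hτx]
        rw [hh] at hq
        exact hq
      obtain ⟨ρ', hρ', σ'', hσ'', hsat'', hsrc'', hact'', htgt''⟩ :=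
        C.hR0s i b σ q hσ hq
      have hsrcρ' : ρ'.src = ts i := ((C.hR0r i b ρ' hρ').1).2.1
      have hWFρ' : ρ'.WF := ((C.hR0r i b ρ' hρ').1).1
      have hag : ∀ v ∈ ρ'.sourceVars, σ'' v = σ v := by
        intro v hv
        rw [Rule.sourceVars, hsrcρ'] at hv
        refine Tm.eq_on_of_subst_eq ?_ v hv
        rw [← hsrcρ'] at hsrc'' ⊢
        exact hsrc''
      have hib : xf i = (x, b).1 := hi
      rcases cd (x, b) hxb i hib ρ' hρ' with ⟨m, hm, hd⟩ | ⟨m, hm, hd⟩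
      · -- flipped negative antecedent in χ
        have hmemneg : (m.1, m.2.1) ∈ χ.neg :=
          Or.inr ⟨(x, b), hxb, i, hib, ρ', hρ', m, hd, rfl⟩
        have hno := hsat.2 hmemneg (σ'' m.2.2)
        have hyes := hsat''.1 (show (m.1, m.2.1, m.2.2) ∈ ρ'.pos by simpa using hm)
        have hx1 : m.1 ∈ ρ'.sourceVars :=
          (hWFρ'.2.2.1 (show (m.1, m.2.1, m.2.2) ∈ ρ'.pos by simpa using hm)).1
        rw [hag m.1 hx1] at hyes
        exact hno hyes
      · -- flipped positive antecedent in χ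
        have hmempos : (m.1, m.2, fr (.inr ((x, b), codeR ρ'))) ∈ χ.pos :=
          Or.inr ⟨(x, b), hxb, i, hib, ρ', hρ', m, hd, rfl⟩
        have hyes := hsat.1 hmempos
        have hno := hsat''.2 (show (m.1, m.2) ∈ ρ'.neg by simpa using hm)
          (σ (fr (.inr ((x, b), codeR ρ'))))
        have hx1 : m.1 ∈ ρ'.sourceVars :=
          hWFρ'.2.2.2.1 (show (m.1, m.2) ∈ ρ'.neg by simpa using hm)
        rw [hag m.1 hx1] at hno
        exact hno hyes
  have hmain := C.hTr.1 ρ hρ (fun v => (τ v).subst σ) hτ'c hτ'sat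
  -- rewrite conclusion
  have hsrceq : ρ.src.subst (fun v => (τ v).subst σ) = (Tm.app f ts).subst σ := by
    rw [hsrc]
    show Tm.app f (fun i => (τ (xf i)).subst σ) = Tm.app f (fun i => (ts i).subst σ)
    congr 1
    funext i
    rw [hτ, tauC_eq_ts hxf i]
  have htgteq : ρ.tgt.subst (fun v => (τ v).subst σ) = (ρ.tgt.subst τ).subst σ := by
    rw [Tm.subst_subst]
  rw [hsrceq, htgteq, hact] at hmain
  exact hmain

end Sound
end RT
namespace RT
open scoped Classical
variable {Op : Type} {ar : Op → ℕ} {Act : Type}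

section Supp
variable [Finite Act]
variable {f : Op} {ts : Fin (ar f) → Tm Op ar} {c : Act}
  {R0 : Fin (ar f) → Act → Set (Rule Op ar Act)} {fr : FIdx Act → ℕ}
  {codeR : Rule Op ar Act → ℕ} {L : Lang Op ar Act}
  {Tr : Tm Op ar → Act → Tm Op ar → Prop} {X : Set ℕ}
set_option linter.unusedSectionVars false
set_option maxHeartbeats 1000000

lemma supporting_RD (C : Ctx ts R0 fr codeR L Tr X) :
    SupportingFor Tr L.ops (RD ts c R0 fr codeR L) (Tm.app f ts) c := by
  intro σ₀ q₀ hσ₀ htr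
  obtain ⟨ρ, hρ, σ₁, hσ₁, hsat₁, hsrc₁, hact₁, htgt₁⟩ := C.hTr.2 _ _ _ htr
  obtain ⟨hρWF, g, x0, hx0inj, hsrc0⟩ := (C.hL.2.2 ρ hρ).1
  rw [hsrc0] at hsrc₁
  simp only [Tm.subst] at hsrc₁
  injection hsrc₁ with hgf hargs
  subst g
  have hcomp : ∀ i, σ₁ (x0 i) = (ts i).subst σ₀ := fun i => congrFun (eq_of_heq hargs) i
  have hsv : ρ.sourceVars = Set.range x0 := by
    rw [Rule.sourceVars, hsrc0, vars_varapp]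
  have htsD : ∀ i, (ts i).vars ⊆ (Tm.app f ts).vars := by
    intro i v hv
    simp only [Tm.vars, Set.mem_iUnion]
    exact ⟨i, hv⟩
  -- choice of sub-ruloids for positive premises
  have hΘd : ∀ p : ℕ × Act × ℕ, ∃ z : Rule Op ar Act × (ℕ → Tm Op ar), p ∈ ρ.pos →
      ∃ i, x0 i = p.1 ∧ z.1 ∈ R0 i p.2.1 ∧ ClosedSub L.ops z.2 ∧ Satisfies Tr z.2 z.1 ∧
        z.1.src.subst z.2 = (ts i).subst σ₀ ∧ z.1.tgt.subst z.2 = σ₁ p.2.2 := by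
    intro p
    by_cases hp : p ∈ ρ.pos
    · have hx : p.1 ∈ ρ.sourceVars :=
        (hρWF.2.2.1 (show (p.1, p.2.1, p.2.2) ∈ ρ.pos by simpa using hp)).1
      rw [hsv] at hx
      obtain ⟨i, hi⟩ := hx
      have htrp : Tr ((ts i).subst σ₀) p.2.1 (σ₁ p.2.2) := by
        have h := hsat₁.1 (show (p.1, p.2.1, p.2.2) ∈ ρ.pos by simpa using hp)
        rw [← hi, hcomp i] at h
        exact h
      obtain ⟨θp, hθmem, σ', hσ', hsat', hsrc', hactp, htgt'⟩ := C.hR0s i p.2.1 σ₀ _ hσ₀ htrp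
      exact ⟨(θp, σ'), fun _ => ⟨i, hi, hθmem, hσ', hsat', hsrc', htgt'⟩⟩
    · exact ⟨(⟨∅, ∅, Tm.var 0, c, Tm.var 0⟩, σ₀), fun h => absurd h hp⟩
  choose Θ hΘ using hΘd
  -- choice of denial literals for negative premises
  have hdex : ∀ n ∈ ρ.neg, ∀ (i : Fin (ar f)), x0 i = n.1 → ∀ ρ' ∈ R0 i n.2,
      ∃ l : (ℕ × Act × ℕ) ⊕ (ℕ × Act),
        (∃ m ∈ ρ'.pos, l = .inl m ∧ ∀ q, ¬ Tr (σ₀ m.1) m.2.1 q) ∨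
        (∃ m ∈ ρ'.neg, l = .inr m ∧ ∃ q', Tr (σ₀ m.1) m.2 q') := by
    intro n hn i hi ρ' hρ'
    by_cases h1 : ∃ m ∈ ρ'.pos, ∀ q, ¬ Tr (σ₀ m.1) m.2.1 q
    · obtain ⟨m, hm, hv⟩ := h1
      exact ⟨.inl m, Or.inl ⟨m, hm, rfl, hv⟩⟩
    by_cases h2 : ∃ m ∈ ρ'.neg, ∃ q', Tr (σ₀ m.1) m.2 q'
    · obtain ⟨m, hm, hv⟩ := h2
      exact ⟨.inr m, Or.inr ⟨m, hm, rfl, hv⟩⟩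
    exfalso
    push_neg at h1 h2
    have hWFρ' : ρ'.WF := ((C.hR0r i n.2 ρ' hρ').1).1
    have hsrcρ' : ρ'.src = ts i := ((C.hR0r i n.2 ρ' hρ').1).2.1
    have hEx : ∀ v : ℕ, ∃ t : Tm Op ar, (t.IsClosed ∧ t.ops ⊆ L.ops ∨ t = σ₀ v) ∧
        (∀ x a, (x, a, v) ∈ ρ'.pos → Tr (σ₀ x) a t) ∧ (v ∉ ρ'.targetVars → t = σ₀ v) := by
      intro v
      by_cases hv : ∃ xa : ℕ × Act, (xa.1, xa.2, v) ∈ ρ'.pos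
      · obtain ⟨xa, hxa⟩ := hv
        obtain ⟨q, hq⟩ := h1 (xa.1, xa.2, v) hxa
        refine ⟨q, Or.inl (tr_target C.hL C.hTr hq), ?_, ?_⟩
        · intro x a hxav
          obtain ⟨hx, ha⟩ := hWFρ'.2.2.2.2.1 hxav hxa
          rw [hx, ha]
          exact hq
        · intro hnt
          exact absurd ⟨xa.1, xa.2, hxa⟩ hnt
      · refine ⟨σ₀ v, Or.inr rfl, ?_, fun _ => rfl⟩
        intro x a hxav
        exact absurd ⟨(x, a), hxav⟩ hv
    choose σ'' hσ''1 hσ''2 hσ''3 using hEx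
    have hσ''c : ClosedSub L.ops σ'' := fun v => (hσ''1 v).elim id (fun h => h ▸ hσ₀ v)
    have hsat'' : Satisfies Tr σ'' ρ' := by
      constructor
      · intro x a y hxy
        have hx : x ∈ ρ'.sourceVars := (hWFρ'.2.2.1 hxy).1
        rw [hσ''3 x (src_tgt_disjoint hWFρ' x hx)]
        exact hσ''2 y x a hxy
      · intro x a hxa q hq
        have hx : x ∈ ρ'.sourceVars := hWFρ'.2.2.2.1 hxa
        rw [hσ''3 x (src_tgt_disjoint hWFρ' x hx)] at hq
        exact h2 (x, a) hxa q hq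
    have hsound : ρ'.Sound Tr L.ops := (C.hR0r i n.2 ρ' hρ').2.2
    have hactρ' : ρ'.act = n.2 := (C.hR0r i n.2 ρ' hρ').2.1
    have h := hsound σ'' hσ''c hsat''
    rw [hactρ', hsrcρ'] at h
    have hsps : (ts i).subst σ'' = (ts i).subst σ₀ := by
      refine Tm.subst_congr ?_
      intro v hv
      refine hσ''3 v ?_
      have : v ∈ ρ'.sourceVars := by
        rw [Rule.sourceVars, hsrcρ']
        exact hv
      exact src_tgt_disjoint hWFρ' v this
    rw [hsps] at h
    have hneg := hsat₁.2 (show (n.1, n.2) ∈ ρ.neg by simpa using hn) (ρ'.tgt.subst σ'')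
    rw [← hi, hcomp i] at hneg
    exact hneg h
  have hdch : ∀ z : (ℕ × Act) × Rule Op ar Act, ∃ l : (ℕ × Act × ℕ) ⊕ (ℕ × Act),
      (∃ n ∈ ρ.neg, (∃ i, x0 i = n.1 ∧ z.2 ∈ R0 i n.2) ∧ z.1 = n) →
      ((∃ m ∈ z.2.pos, l = .inl m ∧ ∀ q, ¬ Tr (σ₀ m.1) m.2.1 q) ∨
       (∃ m ∈ z.2.neg, l = .inr m ∧ ∃ q', Tr (σ₀ m.1) m.2 q')) := by
    intro z
    by_cases h : ∃ n ∈ ρ.neg, (∃ i, x0 i = n.1 ∧ z.2 ∈ R0 i n.2) ∧ z.1 = n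
    · obtain ⟨n, hn, ⟨i, hi, hz2⟩, hz1⟩ := h
      obtain ⟨l, hl⟩ := hdex n hn i hi z.2 hz2
      exact ⟨l, fun _ => hl⟩
    · exact ⟨.inl (0, z.1.2, 0), fun hh => absurd hh h⟩
  choose dfun hdfun using hdch
  -- membership data
  have hcpos : ∀ p ∈ ρ.pos, ∃ i, x0 i = p.1 ∧ (fun p => (Θ p).1) p ∈ R0 i p.2.1 := by
    intro p hp
    obtain ⟨i, hi, hmem, _⟩ := hΘ p hp
    exact ⟨i, hi, hmem⟩
  have hcd : ∀ n ∈ ρ.neg, ∀ (i : Fin (ar f)), x0 i = n.1 → ∀ ρ' ∈ R0 i n.2,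
      (∃ m ∈ ρ'.pos, dfun (n, ρ') = .inl m) ∨ (∃ m ∈ ρ'.neg, dfun (n, ρ') = .inr m) := by
    intro n hn i hi ρ' hρ'
    rcases hdfun (n, ρ') ⟨n, hn, ⟨i, hi, hρ'⟩, rfl⟩ with ⟨m, hm, hl, _⟩ | ⟨m, hm, hl, _⟩
    · exact Or.inl ⟨m, hm, hl⟩
    · exact Or.inr ⟨m, hm, hl⟩
  refine ⟨composite ts c R0 fr codeR ρ x0 (fun p => (Θ p).1) dfun,
    ⟨ρ, hρ, x0, hx0inj, hsrc0, hact₁, _, _, hcpos, hcd, rfl⟩, ?_⟩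
  -- the witnessing substitution
  have hexσ : ∀ v : ℕ, ∃ t : Tm Op ar, (t.IsClosed ∧ t.ops ⊆ L.ops) ∧
      (∀ p ∈ ρ.pos, ∀ y : ℕ, v = fr (.inl (p, y)) → t = (Θ p).2 y) ∧
      (∀ n ∈ ρ.neg, ∀ (i : Fin (ar f)), x0 i = n.1 → ∀ ρ' ∈ R0 i n.2,
        v = fr (.inr (n, codeR ρ')) → ∀ m, dfun (n, ρ') = .inr m → Tr (σ₀ m.1) m.2 t) ∧
      ((∀ k, v ≠ fr k) → t = σ₀ v) := by
    intro v
    by_cases h1 : ∃ z : (ℕ × Act × ℕ) × ℕ, z.1 ∈ ρ.pos ∧ v = fr (.inl z)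
    · obtain ⟨z, hz1, hz2⟩ := h1
      obtain ⟨i, hi, hmem, hσ'c, _⟩ := hΘ z.1 hz1
      refine ⟨(Θ z.1).2 z.2, hσ'c z.2, ?_, ?_, ?_⟩
      · intro p hp y hy
        have he : (Sum.inl (z.1, z.2) : FIdx Act) = .inl (p, y) := by
          refine C.hfr1 ?_
          rw [← hz2, hy]
        obtain ⟨h1', h2'⟩ : z.1 = p ∧ z.2 = y := by simpa [Prod.ext_iff] using he
        rw [← h1', ← h2']
      · intro n hn i' hi' ρ' hρ' hv m hm
        exfalso
        have : (Sum.inl (z.1, z.2) : FIdx Act) = .inr (n, codeR ρ') := by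
          refine C.hfr1 ?_
          rw [← hz2, hv]
        simp at this
      · intro hk
        exact absurd hz2 (hk _)
    · by_cases h2 : ∃ w : (ℕ × Act) × Rule Op ar Act, w.1 ∈ ρ.neg ∧
          (∃ i, x0 i = w.1.1 ∧ w.2 ∈ R0 i w.1.2) ∧ v = fr (.inr (w.1, codeR w.2)) ∧
          ∃ m, dfun w = .inr m
      · obtain ⟨w, hw1, ⟨i, hi, hw2⟩, hv, m, hm⟩ := h2
        rcases hdfun w ⟨w.1, hw1, ⟨i, hi, hw2⟩, rfl⟩ with ⟨m', _, hl, _⟩ | ⟨m', hm', hl, hq⟩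
        · rw [hm] at hl
          exact absurd hl (by simp)
        · rw [hm] at hl
          obtain rfl : m = m' := by injection hl
          obtain ⟨q', hq'⟩ := hq
          refine ⟨q', tr_target C.hL C.hTr hq', ?_, ?_, ?_⟩
          · intro p hp y hy
            exfalso
            have : (Sum.inr (w.1, codeR w.2) : FIdx Act) = .inl (p, y) := by
              refine C.hfr1 ?_
              rw [← hv, hy]
            simp at this
          · intro n hn i' hi' ρ' hρ' hv' m₀ hm₀
            have he : (Sum.inr (w.1, codeR w.2) : FIdx Act) = .inr (n, codeR ρ') := by
              refine C.hfr1 ?_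
              rw [← hv, hv']
            obtain ⟨hn', hc'⟩ : w.1 = n ∧ codeR w.2 = codeR ρ' := by
              simpa [Prod.ext_iff] using he
            have hw2' : w.2 ∈ ⋃ i, ⋃ a, R0 i a :=
              Set.mem_iUnion.2 ⟨i, Set.mem_iUnion.2 ⟨w.1.2, hw2⟩⟩
            have hρ'' : ρ' ∈ ⋃ i, ⋃ a, R0 i a :=
              Set.mem_iUnion.2 ⟨i', Set.mem_iUnion.2 ⟨n.2, hρ'⟩⟩
            have hweq : w.2 = ρ' := C.hcode hw2' hρ'' hc'
            have hzeq : (n, ρ') = w := by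
              rw [← hn', ← hweq]
            rw [hzeq, hm] at hm₀
            obtain rfl : m = m₀ := by injection hm₀
            exact hq'
          · intro hk
            exact absurd hv (hk _)
      · refine ⟨σ₀ v, hσ₀ v, ?_, ?_, fun _ => rfl⟩
        · intro p hp y hy
          exact absurd ⟨(p, y), hp, hy⟩ h1
        · intro n hn i hi ρ' hρ' hv m hm
          exact absurd ⟨(n, ρ'), hn, ⟨i, hi, hρ'⟩, hv, m, hm⟩ h2
  choose σ hσc hσ1 hσ2 hσ3 using hexσ
  have hagree : ∀ v ∈ (Tm.app f ts).vars, σ v = σ₀ v := by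
    intro v hv
    refine hσ3 v ?_
    intro k hk
    exact C.hfr2 k (Or.inr (hk ▸ hv))
  -- satisfaction of the composite's antecedents
  have hsatχ : Satisfies Tr σ (composite ts c R0 fr codeR ρ x0 (fun p => (Θ p).1) dfun) := by
    constructor
    · intro x a y hxy
      rcases hxy with hq | hq
      · obtain ⟨p, hp, m, hm, he⟩ := by
          simpa only [Set.mem_iUnion, Rule.rename, Set.mem_image] using hq
        obtain ⟨i, hi, hmem, hσ'c, hsat', hsrc', htgt'⟩ := hΘ p hp
        have hWFθ : (Θ p).1.WF := ((C.hR0r i p.2.1 _ hmem).1).1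
        have hsrcθ : (Θ p).1.src = ts i := ((C.hR0r i p.2.1 _ hmem).1).2.1
        have hm' : (m.1, m.2.1, m.2.2) ∈ (Θ p).1.pos := by simpa using hm
        have hxm : m.1 ∈ (Θ p).1.sourceVars := (hWFθ.2.2.1 hm').1
        have hym : m.2.2 ∈ (Θ p).1.targetVars := ⟨m.1, m.2.1, hm'⟩
        have hxts : m.1 ∈ (ts i).vars := by
          rw [Rule.sourceVars, hsrcθ] at hxm
          exact hxm
        have hse : (ts i).subst ((Θ p).2) = (ts i).subst σ₀ := by
          conv_lhs => rw [← hsrcθ]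
          exact hsrc'
        have hagσ' : (Θ p).2 m.1 = σ₀ m.1 := Tm.eq_on_of_subst_eq hse m.1 hxts
        have hσx : σ (rnm fr p ((Θ p).1) m.1) = (Θ p).2 m.1 := by
          rw [rnm_src hWFθ hxm, hagσ']
          exact hagree m.1 (htsD i hxts)
        have hσy : σ (rnm fr p ((Θ p).1) m.2.2) = (Θ p).2 m.2.2 := by
          rw [rnm_tgt hym]
          exact hσ1 _ p hp m.2.2 rfl
        have htr' := hsat'.1 hm'
        obtain ⟨rfl, rfl, rfl⟩ :
            x = rnm fr p ((Θ p).1) m.1 ∧ a = m.2.1 ∧ y = rnm fr p ((Θ p).1) m.2.2 := by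
          simpa [Prod.ext_iff, eq_comm] using he
        rw [hσx, hσy]
        exact htr'
      · obtain ⟨n, hn, i, hi, ρ', hρ', m, hd, he⟩ := hq
        have htrv := hσ2 (fr (.inr (n, codeR ρ'))) n hn i hi ρ' hρ' rfl m hd
        have hm' : m ∈ ρ'.neg := decode_inr C hcd hn hi hρ' hd
        have hWFρ' : ρ'.WF := ((C.hR0r i n.2 ρ' hρ').1).1
        have hsrcρ' : ρ'.src = ts i := ((C.hR0r i n.2 ρ' hρ').1).2.1
        have hxm : m.1 ∈ ρ'.sourceVars := hWFρ'.2.2.2.1 (show (m.1, m.2) ∈ ρ'.neg by simpa using hm')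
        have hxts : m.1 ∈ (ts i).vars := by
          rw [Rule.sourceVars, hsrcρ'] at hxm
          exact hxm
        obtain ⟨rfl, rfl, rfl⟩ : x = m.1 ∧ a = m.2 ∧ y = fr (.inr (n, codeR ρ')) := by
          simpa [Prod.ext_iff] using he
        rw [hagree m.1 (htsD i hxts)]
        exact htrv
    · intro x b hxb q hq
      rcases hxb with hq' | hq'
      · obtain ⟨p, hp, m, hm, he⟩ := by
          simpa only [Set.mem_iUnion, Rule.rename, Set.mem_image] using hq'
        obtain ⟨i, hi, hmem, hσ'c, hsat', hsrc', htgt'⟩ := hΘ p hp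
        have hWFθ : (Θ p).1.WF := ((C.hR0r i p.2.1 _ hmem).1).1
        have hsrcθ : (Θ p).1.src = ts i := ((C.hR0r i p.2.1 _ hmem).1).2.1
        have hm' : (m.1, m.2) ∈ (Θ p).1.neg := by simpa using hm
        have hxm : m.1 ∈ (Θ p).1.sourceVars := hWFθ.2.2.2.1 hm'
        have hxts : m.1 ∈ (ts i).vars := by
          rw [Rule.sourceVars, hsrcθ] at hxm
          exact hxm
        have hse : (ts i).subst ((Θ p).2) = (ts i).subst σ₀ := by
          conv_lhs => rw [← hsrcθ]
          exact hsrc'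
        have hagσ' : (Θ p).2 m.1 = σ₀ m.1 := Tm.eq_on_of_subst_eq hse m.1 hxts
        obtain ⟨rfl, rfl⟩ : x = rnm fr p ((Θ p).1) m.1 ∧ b = m.2 := by
          simpa [Prod.ext_iff, eq_comm] using he
        rw [rnm_src hWFθ hxm, hagree m.1 (htsD i hxts), ← hagσ'] at hq
        exact hsat'.2 hm' q hq
      · obtain ⟨n, hn, i, hi, ρ', hρ', m, hd, he⟩ := hq'
        rcases hdfun (n, ρ') ⟨n, hn, ⟨i, hi, hρ'⟩, rfl⟩ with ⟨m', hm', hl, hviol⟩ | ⟨m', _, hl, _⟩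
        · rw [hd] at hl
          obtain rfl : m = m' := by injection hl
          have hWFρ' : ρ'.WF := ((C.hR0r i n.2 ρ' hρ').1).1
          have hsrcρ' : ρ'.src = ts i := ((C.hR0r i n.2 ρ' hρ').1).2.1
          have hxm : m.1 ∈ ρ'.sourceVars := (hWFρ'.2.2.1 (show (m.1, m.2.1, m.2.2) ∈ ρ'.pos by simpa using hm')).1
          have hxts : m.1 ∈ (ts i).vars := by
            rw [Rule.sourceVars, hsrcρ'] at hxm
            exact hxm
          obtain ⟨rfl, rfl⟩ : x = m.1 ∧ b = m.2.1 := by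
            simpa [Prod.ext_iff] using he
          rw [hagree m.1 (htsD i hxts)] at hq
          exact hviol q hq
        · rw [hd] at hl
          exact absurd hl (by simp)
  refine ⟨σ, hσc, hsatχ, ?_, rfl, ?_⟩
  · exact Tm.subst_congr hagree
  · show (ρ.tgt.subst (tauC ts fr ρ x0 (fun p => (Θ p).1))).subst σ = q₀
    rw [Tm.subst_subst, ← htgt₁]
    refine Tm.subst_congr ?_
    intro v hv
    show (tauC ts fr ρ x0 (fun p => (Θ p).1) v).subst σ = σ₁ v
    by_cases h : ∃ i, x0 i = v
    · obtain ⟨i, hi⟩ := h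
      have hts : tauC ts fr ρ x0 (fun p => (Θ p).1) v = ts i := by
        rw [← hi]
        exact tauC_eq_ts hx0inj i
      rw [hts]
      have : (ts i).subst σ = (ts i).subst σ₀ :=
        Tm.subst_congr (fun w hw => hagree w (htsD i hw))
      rw [this, ← hcomp i, hi]
    · have hvt : v ∈ ρ.targetVars := by
        rcases hρWF.2.2.2.2.2 hv with hws | hwt
        · rw [hsv] at hws
          exact absurd hws h
        · exact hwt
      obtain ⟨x₁, a₁, hx₁⟩ := hvt
      have hp : ((x₁, a₁, v) : ℕ × Act × ℕ) ∈ ρ.pos := hx₁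
      rw [tauC_eq_tgt hρWF hp h, Tm.rename_subst]
      obtain ⟨i, hi, hmem, hσ'c, hsat', hsrc', htgt'⟩ := hΘ (x₁, a₁, v) hp
      have hWFθ : (Θ (x₁, a₁, v)).1.WF := ((C.hR0r i a₁ _ hmem).1).1
      have hsrcθ : (Θ (x₁, a₁, v)).1.src = ts i := ((C.hR0r i a₁ _ hmem).1).2.1
      have hagθ : (Θ (x₁, a₁, v)).1.tgt.subst (σ ∘ rnm fr (x₁, a₁, v) ((Θ (x₁, a₁, v)).1)) =
          (Θ (x₁, a₁, v)).1.tgt.subst ((Θ (x₁, a₁, v)).2) := by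
        refine Tm.subst_congr ?_
        intro w hw
        simp only [Function.comp_apply]
        by_cases hwt : w ∈ (Θ (x₁, a₁, v)).1.targetVars
        · rw [rnm_tgt hwt]
          exact hσ1 _ (x₁, a₁, v) hp w rfl
        · have hws : w ∈ (Θ (x₁, a₁, v)).1.sourceVars := by
            rcases hWFθ.2.2.2.2.2 hw with h' | h'
            · exact h'
            · exact absurd h' hwt
          have hwts : w ∈ (ts i).vars := by
            rw [Rule.sourceVars, hsrcθ] at hws
            exact hws
          rw [rnm_src hWFθ hws, hagree w (htsD i hwts)]
          have hse : (ts i).subst ((Θ (x₁, a₁, v)).2) = (ts i).subst σ₀ := by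
            conv_lhs => rw [← hsrcθ]
            exact hsrc'
          exact (Tm.eq_on_of_subst_eq hse w hwts).symm
      rw [hagθ]
      exact htgt'

end Supp
end RT
namespace RT
open scoped Classical
variable {Op : Type} {ar : Op → ℕ} {Act : Type}

section Fin
variable [Finite Act]
variable {f : Op} {ts : Fin (ar f) → Tm Op ar} {c : Act}
  {R0 : Fin (ar f) → Act → Set (Rule Op ar Act)} {fr : FIdx Act → ℕ}
  {codeR : Rule Op ar Act → ℕ} {L : Lang Op ar Act}
  {Tr : Tm Op ar → Act → Tm Op ar → Prop} {X : Set ℕ}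
set_option linter.unusedSectionVars false
set_option maxHeartbeats 1000000

lemma finite_RD (C : Ctx ts R0 fr codeR L Tr X) : (RD ts c R0 fr codeR L).Finite := by
  have hAllR0 : (⋃ i, ⋃ a, R0 i a).Finite :=
    Set.finite_iUnion fun i => Set.finite_iUnion fun a => C.hR0fin i a
  have hAllPrem : (⋃ ρ ∈ L.rules, ρ.pos).Finite :=
    Set.Finite.biUnion C.hL.2.1 fun ρ hρ => ((C.hL.2.2 ρ hρ).1.1).1
  have hAllNeg : (⋃ ρ ∈ L.rules, ρ.neg).Finite :=
    Set.Finite.biUnion C.hL.2.1 fun ρ hρ => ((C.hL.2.2 ρ hρ).1.1).2.1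
  have hWF0 : ∀ θp ∈ ⋃ i, ⋃ a, R0 i a, θp.WF := by
    intro θp hθp
    obtain ⟨i, hi⟩ := Set.mem_iUnion.1 hθp
    obtain ⟨a, ha⟩ := Set.mem_iUnion.1 hi
    exact ((C.hR0r i a θp ha).1).1
  have hAllPos0 : (⋃ θp ∈ ⋃ i, ⋃ a, R0 i a, θp.pos).Finite :=
    Set.Finite.biUnion hAllR0 fun θp hθp => (hWF0 θp hθp).1
  have hAllNeg0 : (⋃ θp ∈ ⋃ i, ⋃ a, R0 i a, θp.neg).Finite :=
    Set.Finite.biUnion hAllR0 fun θp hθp => (hWF0 θp hθp).2.1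
  have hAllTgtV : (⋃ ρ ∈ L.rules, ρ.tgt.vars).Finite :=
    Set.Finite.biUnion C.hL.2.1 fun ρ _ => Tm.vars_finite ρ.tgt
  set PosU : Set (ℕ × Act × ℕ) :=
    ((fun z : (ℕ × Act × ℕ) × (ℕ × Act × ℕ) => (z.2.1, z.2.2.1, fr (.inl (z.1, z.2.2.2)))) ''
      ((⋃ ρ ∈ L.rules, ρ.pos) ×ˢ (⋃ θp ∈ ⋃ i, ⋃ a, R0 i a, θp.pos))) ∪
    ((fun z : ((ℕ × Act) × (ℕ × Act)) × ℕ => (z.1.2.1, z.1.2.2, fr (.inr (z.1.1, z.2)))) ''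
      (((⋃ ρ ∈ L.rules, ρ.neg) ×ˢ (⋃ θp ∈ ⋃ i, ⋃ a, R0 i a, θp.neg)) ×ˢ
        (codeR '' (⋃ i, ⋃ a, R0 i a)))) with hPosUdef
  have hPosU : PosU.Finite :=
    Set.Finite.union ((hAllPrem.prod hAllPos0).image _)
      (((hAllNeg.prod hAllNeg0).prod (hAllR0.image codeR)).image _)
  set NegU : Set (ℕ × Act) :=
    (⋃ θp ∈ ⋃ i, ⋃ a, R0 i a, θp.neg) ∪
    ((fun m : ℕ × Act × ℕ => (m.1, m.2.1)) '' (⋃ θp ∈ ⋃ i, ⋃ a, R0 i a, θp.pos)) with hNegUdef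
  have hNegU : NegU.Finite := Set.Finite.union hAllNeg0 (hAllPos0.image _)
  set Pool : Set (Tm Op ar) :=
    Set.range ts ∪
    ((fun z : (ℕ × Act × ℕ) × Rule Op ar Act => z.2.tgt.rename (rnm fr z.1 z.2)) ''
      ((⋃ ρ ∈ L.rules, ρ.pos) ×ˢ (⋃ i, ⋃ a, R0 i a))) ∪
    (Tm.var '' (⋃ ρ ∈ L.rules, ρ.tgt.vars)) with hPooldef
  have hPool : Pool.Finite :=
    Set.Finite.union (Set.Finite.union (Set.finite_range ts)
      ((hAllPrem.prod hAllR0).image _)) (hAllTgtV.image _)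
  set TgtU : Set (Tm Op ar) :=
    ⋃ ρ ∈ L.rules, {t | ∃ τ, (∀ v ∈ ρ.tgt.vars, τ v ∈ Pool) ∧ t = ρ.tgt.subst τ} with hTgtUdef
  have hTgtU : TgtU.Finite :=
    Set.Finite.biUnion C.hL.2.1 fun ρ _ => Tm.finite_subst_pool ρ.tgt hPool
  refine Set.Finite.subset (Set.Finite.image
    (fun z : Set (ℕ × Act × ℕ) × Set (ℕ × Act) × Tm Op ar =>
      (⟨z.1, z.2.1, Tm.app f ts, c, z.2.2⟩ : Rule Op ar Act))
    ((hPosU.finite_subsets.prod (hNegU.finite_subsets.prod hTgtU)))) ?_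
  rintro χ ⟨ρ, hρ, xf, hxf, hsrc, hact, θ, d, cpos, cd, rfl⟩
  have hρWF : ρ.WF := (C.hL.2.2 ρ hρ).1.1
  have hAllR0mem : ∀ (i : Fin (ar f)) (a : Act) (θp : Rule Op ar Act), θp ∈ R0 i a →
      θp ∈ ⋃ i, ⋃ a, R0 i a := fun i a θp h => Set.mem_iUnion.2 ⟨i, Set.mem_iUnion.2 ⟨a, h⟩⟩
  refine ⟨((composite ts c R0 fr codeR ρ xf θ d).pos,
    (composite ts c R0 fr codeR ρ xf θ d).neg,
    (composite ts c R0 fr codeR ρ xf θ d).tgt), ⟨?_, ?_, ?_⟩, rfl⟩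
  · -- pos ⊆ PosU
    intro q hq
    rw [hPosUdef]
    rcases hq with hq | hq
    · obtain ⟨p, hp, m, hm, rfl⟩ := by
        simpa only [Set.mem_iUnion, Rule.rename, Set.mem_image] using hq
      obtain ⟨i, hi, hmem⟩ := cpos p hp
      have hWFθ : (θ p).WF := hWF0 _ (hAllR0mem i p.2.1 _ hmem)
      have hm' : (m.1, m.2.1, m.2.2) ∈ (θ p).pos := by simpa using hm
      have hx : m.1 ∈ (θ p).sourceVars := (hWFθ.2.2.1 hm').1
      have hy : m.2.2 ∈ (θ p).targetVars := ⟨m.1, m.2.1, hm'⟩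
      refine Or.inl ⟨(p, m), ⟨Set.mem_biUnion hρ hp,
        Set.mem_biUnion (hAllR0mem i p.2.1 _ hmem) hm⟩, ?_⟩
      rw [rnm_src hWFθ hx, rnm_tgt hy]
    · obtain ⟨n, hn, i, hi, ρ', hρ', m, hd, rfl⟩ := hq
      have hm := decode_inr C cd hn hi hρ' hd
      exact Or.inr ⟨((n, m), codeR ρ'), ⟨⟨Set.mem_biUnion hρ hn,
        Set.mem_biUnion (hAllR0mem i n.2 _ hρ') hm⟩,
        Set.mem_image_of_mem codeR (hAllR0mem i n.2 _ hρ')⟩, rfl⟩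
  · -- neg ⊆ NegU
    intro q hq
    rw [hNegUdef]
    rcases hq with hq | hq
    · obtain ⟨p, hp, m, hm, rfl⟩ := by
        simpa only [Set.mem_iUnion, Rule.rename, Set.mem_image] using hq
      obtain ⟨i, hi, hmem⟩ := cpos p hp
      have hWFθ : (θ p).WF := hWF0 _ (hAllR0mem i p.2.1 _ hmem)
      have hm' : (m.1, m.2) ∈ (θ p).neg := by simpa using hm
      have hx : m.1 ∈ (θ p).sourceVars := hWFθ.2.2.2.1 hm'
      refine Or.inl ?_
      rw [rnm_src hWFθ hx]
      exact Set.mem_biUnion (hAllR0mem i p.2.1 _ hmem) hm'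
    · obtain ⟨n, hn, i, hi, ρ', hρ', m, hd, rfl⟩ := hq
      have hm := decode_inl C cd hn hi hρ' hd
      exact Or.inr ⟨m, Set.mem_biUnion (hAllR0mem i n.2 _ hρ') hm, rfl⟩
  · -- tgt ∈ TgtU
    rw [hTgtUdef]
    refine Set.mem_biUnion hρ ⟨tauC ts fr ρ xf θ, ?_, rfl⟩
    intro v hv
    rw [hPooldef]
    by_cases h : ∃ i, xf i = v
    · rw [show tauC ts fr ρ xf θ v = ts h.choose from by unfold tauC; rw [dif_pos h]]
      exact Or.inl (Or.inl ⟨h.choose, rfl⟩)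
    · by_cases h2 : ∃ p, p ∈ ρ.pos ∧ p.2.2 = v
      · rw [show tauC ts fr ρ xf θ v =
            (θ h2.choose).tgt.rename (rnm fr h2.choose (θ h2.choose)) from by
          unfold tauC; rw [dif_neg h, dif_pos h2]]
        obtain ⟨i, hi, hmem⟩ := cpos h2.choose h2.choose_spec.1
        exact Or.inl (Or.inr ⟨(h2.choose, θ h2.choose), ⟨Set.mem_biUnion hρ h2.choose_spec.1,
          hAllR0mem i h2.choose.2.1 _ hmem⟩, rfl⟩)
      · rw [show tauC ts fr ρ xf θ v = Tm.var v from by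
          unfold tauC; rw [dif_neg h, dif_neg h2]]
        exact Or.inr ⟨v, Set.mem_biUnion hρ hv, rfl⟩

end Fin
end RT
namespace RT
open scoped Classical
variable {Op : Type} {ar : Op → ℕ} {Act : Type}
set_option linter.unusedSectionVars false
set_option maxHeartbeats 1000000

theorem ruloid_aux [Finite Act] [Nonempty Act]
    (L : Lang Op ar Act) (hL : L.WellFormed)
    (Tr : Tm Op ar → Act → Tm Op ar → Prop) (hTr : IsTransRel L Tr) :
    ∀ D : Tm Op ar, D.ops ⊆ L.ops → ∀ (c : Act) (X : Set ℕ), X.Finite →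
    ∃ R : Set (Rule Op ar Act), R.Finite ∧
      (∀ ρ ∈ R, IsRuloidFor L.ops ρ D ∧ ρ.act = c ∧
        ρ.Sound Tr L.ops ∧ ρ.targetVars ∩ X = ∅) ∧
      SupportingFor Tr L.ops R D c := by
  intro D
  induction D with
  | var v =>
    intro _ c X hX
    obtain ⟨y, hy⟩ := (Set.Finite.infinite_compl
      (hX.union (Set.finite_singleton v))).nonempty
    have hyv : y ≠ v := fun h => hy (Or.inr (by simp [h]))
    have hyX : y ∉ X := fun h => hy (Or.inl h)
    refine ⟨{⟨{(v, c, y)}, ∅, Tm.var v, c, Tm.var y⟩}, Set.finite_singleton _, ?_, ?_⟩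
    · rintro ρ hρ
      rw [Set.mem_singleton_iff] at hρ
      subst hρ
      have hsv : Rule.sourceVars (Op := Op) (ar := ar)
          (⟨{(v, c, y)}, ∅, Tm.var v, c, Tm.var y⟩ : Rule Op ar Act) = {v} := by
        simp [Rule.sourceVars, Tm.vars]
      have htv : Rule.targetVars (Op := Op) (ar := ar)
          (⟨{(v, c, y)}, ∅, Tm.var v, c, Tm.var y⟩ : Rule Op ar Act) = {y} := by
        ext z
        simp only [Rule.targetVars, Set.mem_setOf_eq, Set.mem_singleton_iff]
        constructor
        · rintro ⟨x, a, hxa⟩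
          exact (show x = v ∧ a = c ∧ z = y by simpa [Prod.ext_iff] using hxa).2.2
        · rintro rfl
          exact ⟨v, c, rfl⟩
      refine ⟨⟨⟨Set.finite_singleton _, Set.finite_empty, ?_, ?_, ?_, ?_⟩, rfl, ?_⟩, rfl, ?_, ?_⟩
      · intro x a y' hxy
        have h3 : x = v ∧ a = c ∧ y' = y := by simpa [Prod.ext_iff] using hxy
        rw [hsv, h3.1, h3.2.2]
        exact ⟨rfl, by simpa using hyv⟩
      · intro x a hx
        simp at hx
      · intro x a y' x' a' h1 h2
        have h3 : x = v ∧ a = c ∧ y' = y := by simpa [Prod.ext_iff] using h1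
        have h4 : x' = v ∧ a' = c ∧ y' = y := by simpa [Prod.ext_iff] using h2
        exact ⟨h3.1.trans h4.1.symm, h3.2.1.trans h4.2.1.symm⟩
      · intro z hz
        have hz' : z = y := hz
        rw [htv, hz']
        exact Or.inr rfl
      · intro g hg
        simp [Tm.ops] at hg
      · intro σ hσ hsat
        exact hsat.1 (Set.mem_singleton _)
      · rw [htv]
        ext z
        simp only [Set.mem_inter_iff, Set.mem_singleton_iff, Set.mem_empty_iff_false, iff_false,
          not_and]
        rintro rfl
        exact hyX
    · intro σ₀ q hσ₀ htr
      refine ⟨⟨{(v, c, y)}, ∅, Tm.var v, c, Tm.var y⟩, Set.mem_singleton _,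
        Function.update σ₀ y q, ?_, ?_, ?_, rfl, ?_⟩
      · intro w
        by_cases hw : w = y
        · subst hw
          simp only [Function.update_self]
          exact tr_target hL hTr htr
        · simp only [Function.update_of_ne hw]
          exact hσ₀ w
      · constructor
        · intro x a y' hxy
          have h3 : x = v ∧ a = c ∧ y' = y := by simpa [Prod.ext_iff] using hxy
          rw [h3.1, h3.2.1, h3.2.2]
          show Tr (Function.update σ₀ y q v) c (Function.update σ₀ y q y)
          rw [Function.update_of_ne (Ne.symm hyv), Function.update_self]
          exact htr
        · intro x a hx
          simp at hx
      · show Function.update σ₀ y q v = σ₀ v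
        rw [Function.update_of_ne (Ne.symm hyv)]
      · show Function.update σ₀ y q y = q
        rw [Function.update_self]
  | app f ts ih =>
    intro hDops c X hX
    have hts : ∀ i, (ts i).ops ⊆ L.ops := by
      intro i g hg
      refine hDops ?_
      simp only [Tm.ops, Set.mem_insert_iff, Set.mem_iUnion]
      exact Or.inr ⟨i, hg⟩
    choose R0 hR using fun (i : Fin (ar f)) (a : Act) => ih i (hts i) a ∅ Set.finite_empty
    have hA : (X ∪ (Tm.app f ts).vars).Finite := hX.union (Tm.vars_finite _)
    have hAc : (X ∪ (Tm.app f ts).vars)ᶜ.Infinite := hA.infinite_compl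
    obtain ⟨enc, henc⟩ := (countable_iff_exists_injective (FIdx Act)).1 inferInstance
    set emb := hAc.natEmbedding with hembdef
    set fr : FIdx Act → ℕ := fun k => (emb (enc k) : ℕ) with hfrdef
    have hfr1 : Function.Injective fr := by
      intro a b hab
      exact henc (emb.injective (Subtype.coe_injective hab))
    have hfr2 : ∀ k, fr k ∉ X ∪ (Tm.app f ts).vars := fun k => (emb (enc k)).2
    have hAllR0 : (⋃ i, ⋃ a, R0 i a).Finite :=
      Set.finite_iUnion fun i => Set.finite_iUnion fun a => (hR i a).1
    obtain ⟨codeR, hcode⟩ := Set.countable_iff_exists_injOn.1 hAllR0.countable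
    have C : Ctx ts R0 fr codeR L Tr X :=
      ⟨hL, hTr, hDops, fun i a => (hR i a).1,
       fun i a θp hθp => ⟨((hR i a).2.1 θp hθp).1, ((hR i a).2.1 θp hθp).2.1,
         ((hR i a).2.1 θp hθp).2.2.1⟩,
       fun i a => (hR i a).2.2, hfr1, hfr2, hcode⟩
    exact ⟨RD ts c R0 fr codeR L, finite_RD C,
      fun ρ hρ => ⟨(mem_RD_spec C ρ hρ).1, (mem_RD_spec C ρ hρ).2.1,
        sound_RD C ρ hρ, (mem_RD_spec C ρ hρ).2.2⟩,
      supporting_RD C⟩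

end RT

/-- Ruloid Theorem: for each context `D` over `Σ_G`, each action
`c`, and each finite set `X` of variables, there is a finite set `R` of
ruloids for `D` with action `c` that are sound, that form a supporting set
for `D` and `c`, and whose target variables avoid `X`. -/
theorem ruloid_theorem {Op : Type} {ar : Op → ℕ} {Act : Type}
    [Finite Act] [Nonempty Act]
    (L : Lang Op ar Act) (hL : L.WellFormed)
    (Tr : Tm Op ar → Act → Tm Op ar → Prop) (hTr : IsTransRel L Tr)
    (X : Set ℕ) (hX : X.Finite)
    (D : Tm Op ar) (hD : D.ops ⊆ L.ops) (c : Act) :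
    ∃ R : Set (Rule Op ar Act), R.Finite ∧
      (∀ ρ ∈ R, IsRuloidFor L.ops ρ D ∧ ρ.act = c ∧
        ρ.Sound Tr L.ops ∧ ρ.targetVars ∩ X = ∅) ∧
      SupportingFor Tr L.ops R D c := by
  obtain ⟨R, h1, h2, h3⟩ := RT.ruloid_aux L hL Tr hTr D hD c X hX
  exact ⟨R, h1, h2, h3⟩

end GSOSPaper
end

section
/- (Soundness of rule-matching bisimilarity) Let G be a GSOS language without junk rules, and let P, Q be Σ_G-terms. If P ≈RM_G Q (P and Q are rule-matching bisimilar), then Algbis(G) ⊨ P = Q, i.e., Pσ ↔_G Qσ for every closed Σ_G-substitution σ. -/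
/-!
Common infrastructure for formalizing results about GSOS languages
("A rule-matching bisimulation method", Aceto et al.).

* Variables are natural numbers (a countably infinite set).
* Terms over a signature given by a type `Op` of operation symbols with
  arities `ar : Op → ℕ`.
* GSOS rules and ruloids, the induced (sound and supported) transition
  relation, bisimilarity, ruloid systems, valid ruloids, initial transition
  formulae and rule-matching bisimulation.
-/

namespace GSOSPaper

variable {Op : Type} {ar : Op → ℕ} {Act : Type}

section SoundnessLemmas

variable {Op : Type} {ar : Op → ℕ} {Act : Type}

theorem Tm.subst_congr_s5 {σ τ : ℕ → Tm Op ar} :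
    ∀ t : Tm Op ar, (∀ x ∈ t.vars, σ x = τ x) → t.subst σ = t.subst τ := by
  intro t
  induction t with
  | var x => intro h; exact h x rfl
  | app f ts ih =>
    intro h
    simp only [Tm.subst]
    exact congrArg (Tm.app f)
      (funext fun i => ih i fun x hx => h x (Set.mem_iUnion.mpr ⟨i, hx⟩))

theorem Tm.subst_eq_on_vars {σ τ : ℕ → Tm Op ar} :
    ∀ t : Tm Op ar, t.subst σ = t.subst τ → ∀ x ∈ t.vars, σ x = τ x := by
  intro t
  induction t with
  | var x =>
    intro h y hy
    simp only [Tm.vars, Set.mem_singleton_iff] at hy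
    subst hy; exact h
  | app f ts ih =>
    intro h y hy
    simp only [Tm.subst, Tm.app.injEq, heq_eq_eq, eq_self_iff_true, true_and] at h
    simp only [Tm.vars, Set.mem_iUnion] at hy
    obtain ⟨i, hi⟩ := hy
    exact ih i (congrFun h i) y hi

theorem Tm.subst_subst_s5 (t : Tm Op ar) (σ τ : ℕ → Tm Op ar) :
    (t.subst σ).subst τ = t.subst fun x => (σ x).subst τ := by
  induction t with
  | var x => rfl
  | app f ts ih =>
    simp only [Tm.subst]
    exact congrArg (Tm.app f) (funext fun i => ih i)

theorem Tm.subst_var (t : Tm Op ar) : (t.subst fun x => Tm.var x) = t := by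
  induction t with
  | var x => rfl
  | app f ts ih =>
    simp only [Tm.subst]
    exact congrArg (Tm.app f) (funext fun i => ih i)

theorem Tm.rename_subst_s5 (t : Tm Op ar) (r : ℕ → ℕ) (σ : ℕ → Tm Op ar) :
    (t.rename r).subst σ = t.subst fun x => σ (r x) := by
  rw [Tm.rename, Tm.subst_subst_s5]
  rfl

theorem Tm.rename_id_on {t : Tm Op ar} {r : ℕ → ℕ}
    (h : ∀ x ∈ t.vars, r x = x) : t.rename r = t := by
  rw [Tm.rename]
  calc t.subst (fun x => Tm.var (r x)) = t.subst (fun x => Tm.var x) :=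
        Tm.subst_congr_s5 t fun x hx => by rw [h x hx]
    _ = t := Tm.subst_var t

theorem subst_closed_ops {S : Set Op} {σ : ℕ → Tm Op ar} (hσ : ClosedSub S σ) :
    ∀ t : Tm Op ar, t.ops ⊆ S → (t.subst σ).IsClosed ∧ (t.subst σ).ops ⊆ S := by
  intro t
  induction t with
  | var x => intro _; exact hσ x
  | app f ts ih =>
    intro ht
    have hts : ∀ i, (ts i).ops ⊆ S := fun i g hg =>
      ht (Set.mem_insert_iff.mpr (Or.inr (Set.mem_iUnion.mpr ⟨i, hg⟩)))
    constructor
    · show Tm.vars _ = ∅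
      simp only [Tm.subst, Tm.vars]
      exact Set.iUnion_eq_empty.mpr fun i => (ih i (hts i)).1
    · intro g hg
      simp only [Tm.subst, Tm.ops, Set.mem_insert_iff, Set.mem_iUnion] at hg
      rcases hg with rfl | ⟨i, hi⟩
      · exact ht (Set.mem_insert g _)
      · exact (ih i (hts i)).2 hi

theorem mem_rename_pos {ρ : Rule Op ar Act} {r : ℕ → ℕ} {x : ℕ} {b : Act} {y : ℕ} :
    (x, b, y) ∈ (ρ.rename r).pos ↔
      ∃ x₀ y₀, (x₀, b, y₀) ∈ ρ.pos ∧ r x₀ = x ∧ r y₀ = y := by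
  constructor
  · intro h
    simp only [Rule.rename, Set.mem_image] at h
    obtain ⟨⟨x₀, b₀, y₀⟩, hmem, heq⟩ := h
    injection heq with hx h2
    injection h2 with hb hy
    subst hb
    exact ⟨x₀, y₀, hmem, hx, hy⟩
  · rintro ⟨x₀, y₀, hmem, hx, hy⟩
    simp only [Rule.rename, Set.mem_image]
    exact ⟨(x₀, b, y₀), hmem, by show (r x₀, b, r y₀) = (x, b, y); rw [hx, hy]⟩

theorem mem_rename_neg {ρ : Rule Op ar Act} {r : ℕ → ℕ} {x : ℕ} {b : Act} :
    (x, b) ∈ (ρ.rename r).neg ↔ ∃ x₀, (x₀, b) ∈ ρ.neg ∧ r x₀ = x := by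
  constructor
  · intro h
    simp only [Rule.rename, Set.mem_image] at h
    obtain ⟨⟨x₀, b₀⟩, hmem, heq⟩ := h
    injection heq with hx hb
    subst hb
    exact ⟨x₀, hmem, hx⟩
  · rintro ⟨x₀, hmem, hx⟩
    simp only [Rule.rename, Set.mem_image]
    exact ⟨(x₀, b), hmem, by show (r x₀, b) = (x, b); rw [hx]⟩

end SoundnessLemmas

/-- Soundness: in a GSOS language without junk rules,
rule-matching bisimilar terms are bisimilar under every closed substitution,
i.e. `P ≈RM_G Q` implies `Algbis(G) ⊨ P = Q`. -/
theorem rm_bisim_sound {Op : Type} {ar : Op → ℕ} {Act : Type}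
    [Finite Act] [Nonempty Act]
    (L : Lang Op ar Act) (hL : L.WellFormed)
    (Tr : Tm Op ar → Act → Tm Op ar → Prop) (hTr : IsTransRel L Tr)
    (hnj : ∀ ρ ∈ L.rules, ¬ IsJunk L Tr ρ)
    (rul : Tm Op ar → Set (Rule Op ar Act))
    (hrul : IsRuloidSystem L Tr rul) (hjf : JunkFree L Tr rul)
    (P Q : Tm Op ar) (hP : P.ops ⊆ L.ops) (hQ : Q.ops ⊆ L.ops)
    (hRM : RMBisim L Tr rul P Q) :
    ∀ σ, ClosedSub L.ops σ → Bisim Tr (P.subst σ) (Q.subst σ) := by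
  classical
  obtain ⟨R0, ⟨hsym, hstep⟩, hPQ0⟩ := hRM
  have trcl : ∀ p a q, Tr p a q → q.IsClosed ∧ q.ops ⊆ L.ops := by
    intro p a q h
    obtain ⟨ρ, hρ, σ'', hσ'', _, _, _, htgt⟩ := hTr.2 p a q h
    rw [← htgt]
    exact subst_closed_ops hσ'' _ (hL.2.2 ρ hρ).2.2
  intro σ hσ
  refine ⟨fun p q => ∃ P' Q' σ', ClosedSub L.ops σ' ∧ R0 P' Q' ∧
      p = P'.subst σ' ∧ q = Q'.subst σ', ⟨?_, ?_⟩, P, Q, σ, hσ, hPQ0, rfl, rfl⟩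
  · rintro p q ⟨P', Q', σ', h1, h2, h3, h4⟩
    exact ⟨Q', P', σ', h1, hsym h2, h4, h3⟩
  · rintro p q ⟨P', Q', σ', hσ', hR, rfl, rfl⟩ a p' htr
    obtain ⟨ρ, hρmem', σ₁, hσ₁, hsat₁, hsrc₁, hact₁, htgt₁⟩ :=
      (hrul P').2.2.2 a σ' p' hσ' htr
    obtain ⟨hρmem, hρact⟩ := hρmem'
    obtain ⟨hWF, hρsrc, -⟩ := (hrul P').2.1 ρ hρmem
    have hTS : ∀ z ∈ ρ.targetVars, z ∉ ρ.sourceVars := fun z hz =>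
      let ⟨x, a', hm⟩ := hz; (hWF.2.2.1 hm).2
    have hsrcv : ρ.sourceVars = P'.vars := congrArg Tm.vars hρsrc
    have hagree : ∀ x ∈ P'.vars, σ₁ x = σ' x := by
      have h' := hsrc₁
      rw [hρsrc] at h'
      exact Tm.subst_eq_on_vars P' h'
    -- the substitution σ₂ : σ₁ on target variables of ρ, σ' elsewhere
    obtain ⟨σ₂, hσ₂T, hσ₂N⟩ :
        ∃ σ₂ : ℕ → Tm Op ar, (∀ z ∈ ρ.targetVars, σ₂ z = σ₁ z) ∧
          (∀ z, z ∉ ρ.targetVars → σ₂ z = σ' z) :=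
      ⟨fun z => if z ∈ ρ.targetVars then σ₁ z else σ' z,
        fun z hz => if_pos hz, fun z hz => if_neg hz⟩
    have hσ₂S : ∀ z ∈ ρ.sourceVars, σ₂ z = σ₁ z := by
      intro z hz
      have hzT : z ∉ ρ.targetVars := fun hT => hTS z hT hz
      rw [hσ₂N z hzT]
      exact (hagree z (hsrcv ▸ hz)).symm
    have hσ₂cl : ClosedSub L.ops σ₂ := by
      intro z
      by_cases h : z ∈ ρ.targetVars
      · rw [hσ₂T z h]; exact hσ₁ z
      · rw [hσ₂N z h]; exact hσ' z
    have hsat₂ : Satisfies Tr σ₂ ρ := by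
      constructor
      · intro x b y hm
        rw [hσ₂S x (hWF.2.2.1 hm).1, hσ₂T y ⟨x, b, hm⟩]
        exact hsat₁.1 hm
      · intro x b hm
        rw [hσ₂S x (hWF.2.2.2.1 hm)]
        exact hsat₁.2 hm
    have hhyp₂ : HypsSat Tr σ₂ ρ := ⟨fun x b y hm => ⟨σ₂ y, hsat₂.1 hm⟩, hsat₂.2⟩
    obtain ⟨J, -, hJvalid, hJcond, hJhyps⟩ := hstep P' Q' hR ρ hρmem
    obtain ⟨ρ', hρ'J, hhyp'⟩ := hJhyps σ₂ hσ₂cl hhyp₂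
    obtain ⟨hact', hRtgt, hdisj, hcommon⟩ := hJcond ρ' hρ'J
    obtain ⟨ρ'', hρ''mem, r, hrfix, hrinj, hravoid, hρ'eq⟩ := hJvalid ρ' hρ'J
    subst hρ'eq
    obtain ⟨hWF'', hρ''src, -⟩ := (hrul Q').2.1 ρ'' hρ''mem
    have hsound'' := (hrul Q').2.2.1 ρ'' hρ''mem
    have hTS'' : ∀ z ∈ ρ''.targetVars, z ∉ ρ''.sourceVars := fun z hz =>
      let ⟨x, a', hm⟩ := hz; (hWF''.2.2.1 hm).2
    have hsrc' : (ρ''.rename r).src = Q' := by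
      show ρ''.src.rename r = Q'
      rw [hρ''src]
      refine Tm.rename_id_on fun x hx => hrfix x fun hT => hTS'' x hT ?_
      show x ∈ ρ''.src.vars
      rw [hρ''src]
      exact hx
    have hsrcv' : (ρ''.rename r).sourceVars = Q'.vars := congrArg Tm.vars hsrc'
    have htv' : ∀ z, z ∈ (ρ''.rename r).targetVars ↔
        ∃ y₀ ∈ ρ''.targetVars, r y₀ = z := by
      intro z
      constructor
      · rintro ⟨x, b, hm⟩
        obtain ⟨x₀, y₀, hm₀, -, hy⟩ := mem_rename_pos.mp hm
        exact ⟨y₀, ⟨x₀, b, hm₀⟩, hy⟩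
      · rintro ⟨y₀, ⟨x₀, b, hm₀⟩, rfl⟩
        exact ⟨r x₀, b, mem_rename_pos.mpr ⟨x₀, y₀, hm₀, rfl, rfl⟩⟩
    have hT'Q : ∀ z ∈ (ρ''.rename r).targetVars, z ∉ Q'.vars := by
      intro z hz hzq
      obtain ⟨y₀, hy₀, rfl⟩ := (htv' z).mp hz
      exact hravoid y₀ hy₀ (by rw [hsrcv']; exact hzq)
    have huniq' : ∀ ⦃x b y x' b'⦄, (x, b, y) ∈ (ρ''.rename r).pos →
        (x', b', y) ∈ (ρ''.rename r).pos → x = x' ∧ b = b' := by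
      intro x b y x' b' h1 h2
      obtain ⟨x₀, y₀, hm₀, hx₀, hy₀⟩ := mem_rename_pos.mp h1
      obtain ⟨x₁, y₁, hm₁, hx₁, hy₁⟩ := mem_rename_pos.mp h2
      have hy : y₀ = y₁ := hrinj ⟨x₀, b, hm₀⟩ ⟨x₁, b', hm₁⟩ (hy₀.trans hy₁.symm)
      subst hy
      obtain ⟨hxx, hbb⟩ := hWF''.2.2.2.2.1 hm₀ hm₁
      exact ⟨by rw [← hx₀, ← hx₁, hxx], hbb⟩
    have hposx' : ∀ ⦃x b y⦄, (x, b, y) ∈ (ρ''.rename r).pos → x ∈ Q'.vars := by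
      intro x b y h
      obtain ⟨x₀, y₀, hm₀, hx₀, -⟩ := mem_rename_pos.mp h
      have hx₀s : x₀ ∈ ρ''.sourceVars := (hWF''.2.2.1 hm₀).1
      have hfix : r x₀ = x₀ := hrfix x₀ fun hT => hTS'' x₀ hT hx₀s
      have hx₀v : x₀ ∈ ρ''.src.vars := hx₀s
      rw [hρ''src] at hx₀v
      rw [← hx₀, hfix]
      exact hx₀v
    have hnegx' : ∀ ⦃x b⦄, (x, b) ∈ (ρ''.rename r).neg → x ∈ Q'.vars := by
      intro x b h
      obtain ⟨x₀, hm₀, hx₀⟩ := mem_rename_neg.mp h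
      have hx₀s : x₀ ∈ ρ''.sourceVars := hWF''.2.2.2.1 hm₀
      have hfix : r x₀ = x₀ := hrfix x₀ fun hT => hTS'' x₀ hT hx₀s
      have hx₀v : x₀ ∈ ρ''.src.vars := hx₀s
      rw [hρ''src] at hx₀v
      rw [← hx₀, hfix]
      exact hx₀v
    have hd : ∀ z, z ∈ (ρ''.rename r).targetVars ∪ ρ.targetVars →
        z ∉ ρ.sourceVars ∪ (ρ''.rename r).sourceVars :=
      fun z h1 h2 => Set.eq_empty_iff_forall_notMem.mp hdisj z ⟨h1, h2⟩
    have hTQ : ∀ z ∈ ρ.targetVars, z ∉ Q'.vars := fun z hz hq =>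
      hd z (Or.inr hz) (Or.inr (hsrcv'.symm ▸ hq))
    have hT'P : ∀ z ∈ (ρ''.rename r).targetVars, z ∉ ρ.sourceVars := fun z hz hp =>
      hd z (Or.inl hz) (Or.inl hp)
    -- the substitution τ : witnesses on new target variables, σ₂ elsewhere
    obtain ⟨τ, hτW, hτN⟩ :
        ∃ τ : ℕ → Tm Op ar,
          (∀ z, (z ∈ (ρ''.rename r).targetVars ∧ z ∉ ρ.targetVars) →
            (∀ x b, (x, b, z) ∈ (ρ''.rename r).pos → Tr (σ₂ x) b (τ z)) ∧
              (τ z).IsClosed ∧ (τ z).ops ⊆ L.ops) ∧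
          (∀ z, ¬(z ∈ (ρ''.rename r).targetVars ∧ z ∉ ρ.targetVars) → τ z = σ₂ z) := by
      have hwit : ∀ z, z ∈ (ρ''.rename r).targetVars →
          ∃ q : Tm Op ar, (∀ x b, (x, b, z) ∈ (ρ''.rename r).pos → Tr (σ₂ x) b q) ∧
            q.IsClosed ∧ q.ops ⊆ L.ops := by
        intro z hz
        obtain ⟨x, b, hm⟩ := hz
        obtain ⟨q, hq⟩ := hhyp'.1 hm
        refine ⟨q, ?_, (trcl _ _ _ hq).1, (trcl _ _ _ hq).2⟩
        intro x' b' hm'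
        obtain ⟨hx, hb⟩ := huniq' hm' hm
        rw [hx, hb]
        exact hq
      refine ⟨fun z => if h : z ∈ (ρ''.rename r).targetVars ∧ z ∉ ρ.targetVars
        then Classical.choose (hwit z h.1) else σ₂ z, ?_, ?_⟩
      · intro z h
        have hs := Classical.choose_spec (hwit z h.1)
        simpa only [dif_pos h] using hs
      · intro z h
        exact dif_neg h
    have hτcl : ClosedSub L.ops τ := by
      intro z
      by_cases h : z ∈ (ρ''.rename r).targetVars ∧ z ∉ ρ.targetVars
      · exact ⟨(hτW z h).2.1, (hτW z h).2.2⟩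
      · rw [hτN z h]; exact hσ₂cl z
    have hτQ : ∀ z ∈ Q'.vars, τ z = σ₂ z := fun z hz =>
      hτN z fun h => hT'Q z h.1 hz
    have hsatτ : Satisfies Tr τ (ρ''.rename r) := by
      constructor
      · intro x b y hm
        rw [hτQ x (hposx' hm)]
        by_cases hy : y ∈ ρ.targetVars
        · have hyT' : y ∈ (ρ''.rename r).targetVars := ⟨x, b, hm⟩
          rw [hτN y fun h => h.2 hy]
          obtain ⟨x', hx', b', hb1, hb2⟩ := hcommon y ⟨hy, hyT'⟩
          obtain ⟨hxx, hbb⟩ := huniq' hm hb2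
          rw [hxx, hbb]
          exact hsat₂.1 hb1
        · exact (hτW y ⟨⟨x, b, hm⟩, hy⟩).1 x b hm
      · intro x b hm
        rw [hτQ x (hnegx' hm)]
        exact hhyp'.2 hm
    have hsatτ'' : Satisfies Tr (fun z => τ (r z)) ρ'' := by
      constructor
      · intro x₀ b y₀ hm
        exact hsatτ.1 (mem_rename_pos.mpr ⟨x₀, y₀, hm, rfl, rfl⟩)
      · intro x₀ b hm
        exact hsatτ.2 (mem_rename_neg.mpr ⟨x₀, hm, rfl⟩)
    have hconc := hsound'' (fun z => τ (r z)) (fun z => hτcl (r z)) hsatτ''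
    have hacteq : ρ''.act = a := hact'.trans hρact
    have hsrceq : ρ''.src.subst (fun z => τ (r z)) = Q'.subst σ' := by
      rw [← Tm.rename_subst_s5 ρ''.src r τ]
      have : ρ''.src.rename r = Q' := hsrc'
      rw [this]
      calc Q'.subst τ = Q'.subst σ₂ := Tm.subst_congr_s5 Q' hτQ
        _ = Q'.subst σ' := Tm.subst_congr_s5 Q' fun z hz =>
            hσ₂N z fun hT => hTQ z hT hz
    have htgteq : ρ''.tgt.subst (fun z => τ (r z)) = (ρ''.rename r).tgt.subst τ := by
      rw [← Tm.rename_subst_s5 ρ''.tgt r τ]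
      rfl
    refine ⟨(ρ''.rename r).tgt.subst τ, ?_, ρ.tgt, (ρ''.rename r).tgt, τ, hτcl, hRtgt, ?_, rfl⟩
    · rw [← hsrceq, ← hacteq, ← htgteq]
      exact hconc
    · rw [← htgt₁]
      apply Tm.subst_congr_s5
      intro z hz
      have hz' := hWF.2.2.2.2.2 hz
      have h2 : τ z = σ₂ z := hτN z fun hpair => by
        rcases hz' with h | h
        · exact hT'P z hpair.1 h
        · exact hpair.2 h
      have h1 : σ₂ z = σ₁ z := by
        rcases hz' with h | h
        · exact hσ₂S z h
        · exact hσ₂T z h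
      rw [h2, h1]


end GSOSPaper
end

section
/- Let G be a GSOS language without junk rules. Restricted to closed Σ_G-terms, rule-matching bisimilarity coincides with bisimilarity: for all closed Σ_G-terms p and q, p ≈RM_G q if and only if p ↔_G q. -/
/-!
Common infrastructure for formalizing results about GSOS languages
("A rule-matching bisimulation method", Aceto et al.).

* Variables are natural numbers (a countably infinite set).
* Terms over a signature given by a type `Op` of operation symbols with
  arities `ar : Op → ℕ`.
* GSOS rules and ruloids, the induced (sound and supported) transition
  relation, bisimilarity, ruloid systems, valid ruloids, initial transition
  formulae and rule-matching bisimulation.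
-/

namespace GSOSPaper

variable {Op : Type} {ar : Op → ℕ} {Act : Type}

private lemma subst_closed {t : Tm Op ar} (h : t.IsClosed) (σ : ℕ → Tm Op ar) :
    t.subst σ = t := by
  induction t with
  | var x => exact absurd h (Set.singleton_ne_empty x)
  | app f ts ih =>
    simp only [Tm.IsClosed, Tm.vars, Set.iUnion_eq_empty] at h
    simp only [Tm.subst]
    congr 1
    funext i
    exact ih i (h i)

private lemma closed_ruloid {L : Lang Op ar Act}
    {Tr : Tm Op ar → Act → Tm Op ar → Prop} {rul : Tm Op ar → Set (Rule Op ar Act)}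
    (hrul : IsRuloidSystem L Tr rul)
    {P : Tm Op ar} (hP : P.IsClosed) {ρ : Rule Op ar Act} (hρ : ρ ∈ rul P) :
    ρ.pos = ∅ ∧ ρ.neg = ∅ ∧ ρ.src = P ∧ ρ.tgt.IsClosed ∧ ρ.tgt.ops ⊆ L.ops := by
  obtain ⟨hwf, hsrc, hops⟩ := (hrul P).2.1 ρ hρ
  have hsv : ρ.sourceVars = ∅ := by rw [Rule.sourceVars, hsrc]; exact hP
  obtain ⟨-, -, hposwf, hnegwf, -, htgt⟩ := hwf
  have hpos : ρ.pos = ∅ := by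
    ext ⟨x, a, y⟩
    simp only [Set.mem_empty_iff_false, iff_false]
    intro hm
    have := (hposwf hm).1
    rw [hsv] at this
    exact this
  have hneg : ρ.neg = ∅ := by
    ext ⟨x, a⟩
    simp only [Set.mem_empty_iff_false, iff_false]
    intro hm
    have := hnegwf hm
    rw [hsv] at this
    exact this
  have htv : ρ.targetVars = ∅ := by
    ext y; simp [Rule.targetVars, hpos]
  refine ⟨hpos, hneg, hsrc, ?_, hops⟩
  have hsub : ρ.tgt.vars ⊆ (∅ : Set ℕ) := by
    intro v hv
    rcases htgt hv with h | h
    · rw [hsv] at h; exact h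
    · rw [htv] at h; exact h
  exact Set.subset_empty_iff.mp hsub

private lemma rename_closed {ρ : Rule Op ar Act}
    (hpos : ρ.pos = ∅) (hneg : ρ.neg = ∅) (hsrc : ρ.src.IsClosed)
    (htgt : ρ.tgt.IsClosed) (r : ℕ → ℕ) : ρ.rename r = ρ := by
  cases ρ with
  | mk pos neg src act tgt =>
    simp only at hpos hneg hsrc htgt
    simp only [Rule.rename, Rule.mk.injEq]
    exact ⟨by rw [hpos]; exact Set.image_empty _,
      by rw [hneg]; exact Set.image_empty _,
      subst_closed hsrc _, trivial, subst_closed htgt _⟩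

private lemma hyps_trivial {ρ : Rule Op ar Act}
    (hpos : ρ.pos = ∅) (hneg : ρ.neg = ∅)
    (Tr : Tm Op ar → Act → Tm Op ar → Prop) (σ : ℕ → Tm Op ar) :
    HypsSat Tr σ ρ :=
  ⟨fun _ _ _ h => absurd h (by simp [hpos]),
   fun _ _ h => absurd h (by simp [hneg])⟩

private lemma sat_trivial {ρ : Rule Op ar Act}
    (hpos : ρ.pos = ∅) (hneg : ρ.neg = ∅)
    (Tr : Tm Op ar → Act → Tm Op ar → Prop) (σ : ℕ → Tm Op ar) :
    Satisfies Tr σ ρ :=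
  ⟨fun _ _ _ h => absurd h (by simp [hpos]),
   fun _ _ h => absurd h (by simp [hneg])⟩

/-- over closed terms, rule-matching bisimilarity coincides with
bisimilarity. -/
theorem rm_bisim_closed_terms {Op : Type} {ar : Op → ℕ} {Act : Type}
    [Finite Act] [Nonempty Act]
    (L : Lang Op ar Act) (hL : L.WellFormed)
    (Tr : Tm Op ar → Act → Tm Op ar → Prop) (hTr : IsTransRel L Tr)
    (hnj : ∀ ρ ∈ L.rules, ¬ IsJunk L Tr ρ)
    (rul : Tm Op ar → Set (Rule Op ar Act))
    (hrul : IsRuloidSystem L Tr rul) (hjf : JunkFree L Tr rul)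
    (p q : Tm Op ar) (hp : p.IsClosed) (hq : q.IsClosed)
    (hpo : p.ops ⊆ L.ops) (hqo : q.ops ⊆ L.ops) :
    RMBisim L Tr rul p q ↔ Bisim Tr p q := by
  classical
  have hσc : ClosedSub L.ops (fun _ => p) := fun _ => ⟨hp, hpo⟩
  constructor
  · -- RM bisimilarity implies bisimilarity
    rintro ⟨R, ⟨hRsym, hRstep⟩, hRpq⟩
    refine ⟨fun a b => R a b ∧ a.IsClosed ∧ b.IsClosed ∧ a.ops ⊆ L.ops ∧ b.ops ⊆ L.ops,
      ⟨?_, ?_⟩, hRpq, hp, hq, hpo, hqo⟩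
    · rintro a b ⟨h1, h2, h3, h4, h5⟩
      exact ⟨hRsym h1, h3, h2, h5, h4⟩
    · rintro a b ⟨hab, hac, hbc, hao, hbo⟩ c a' htr
      -- find a ruloid for `a` supporting the transition
      have htr' : Tr (a.subst (fun _ => p)) c a' := by
        rw [subst_closed hac]; exact htr
      obtain ⟨ρ, ⟨hρ, hρact⟩, σ, hσ, hsat, hsrc, -, htgtσ⟩ :=
        ((hrul a).2.2.2 c) (fun _ => p) a' hσc htr'
      obtain ⟨hpos, hneg, hsrcρ, htgtc, htgto⟩ := closed_ruloid hrul hac hρ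
      have ha' : ρ.tgt = a' := by rw [← htgtσ, subst_closed htgtc]
      subst ha'
      -- match it via the RM bisimulation
      obtain ⟨J, -, hJvalid, hJprop, hJhyps⟩ := hRstep a b hab ρ hρ
      obtain ⟨ρ', hρ'J, -⟩ :=
        hJhyps (fun _ => p) hσc (hyps_trivial hpos hneg Tr _)
      obtain ⟨ρ'', hρ'', r, -, -, -, heq⟩ := hJvalid ρ' hρ'J
      obtain ⟨hpos'', hneg'', hsrc'', htgtc'', htgto''⟩ := closed_ruloid hrul hbc hρ''
      have hρ'eq : ρ' = ρ'' := by
        rw [heq, rename_closed hpos'' hneg'' (by rw [hsrc'']; exact hbc) htgtc'' r]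
      obtain ⟨hact', hRt, -, -⟩ := hJprop ρ' hρ'J
      have htrb : Tr b ρ''.act ρ''.tgt := by
        have := (hrul b).2.2.1 ρ'' hρ'' (fun _ => p) hσc
          (sat_trivial hpos'' hneg'' Tr _)
        rwa [hsrc'', subst_closed hbc, subst_closed htgtc''] at this
      have hactc : ρ''.act = c := by rw [← hρ'eq, hact', hρact]
      rw [hρ'eq] at hRt
      exact ⟨ρ''.tgt, by rwa [hactc] at htrb, hRt, htgtc, htgtc'', htgto, htgto''⟩
  · -- bisimilarity implies RM bisimilarity
    rintro ⟨R, hB, hRpq⟩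
    refine ⟨fun a b => a.IsClosed ∧ b.IsClosed ∧ a.ops ⊆ L.ops ∧ b.ops ⊆ L.ops ∧
      Bisim Tr a b, ⟨?_, ?_⟩, hp, hq, hpo, hqo, R, hB, hRpq⟩
    · rintro a b ⟨h1, h2, h3, h4, R', hB', hab⟩
      exact ⟨h2, h1, h4, h3, R', hB', hB'.1 hab⟩
    · rintro P Q ⟨hPc, hQc, hPo, hQo, R', hB', hPQ⟩ ρ hρ
      obtain ⟨hpos, hneg, hsrcρ, htgtc, htgto⟩ := closed_ruloid hrul hPc hρ
      have htrP : Tr P ρ.act ρ.tgt := by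
        have := (hrul P).2.2.1 ρ hρ (fun _ => p) hσc (sat_trivial hpos hneg Tr _)
        rwa [hsrcρ, subst_closed hPc, subst_closed htgtc] at this
      obtain ⟨q', htrQ, hRq'⟩ := hB'.2 P Q hPQ ρ.act ρ.tgt htrP
      have htrQ' : Tr (Q.subst (fun _ => p)) ρ.act q' := by
        rw [subst_closed hQc]; exact htrQ
      obtain ⟨ρ'', ⟨hρ'', hρ''act⟩, σ, hσ, hsat, hsrc'', -, htgtσ⟩ :=
        ((hrul Q).2.2.2 ρ.act) (fun _ => p) q' hσc htrQ'
      obtain ⟨hpos'', hneg'', hsrcρ'', htgtc'', htgto''⟩ := closed_ruloid hrul hQc hρ''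
      have hq'' : ρ''.tgt = q' := by rw [← htgtσ, subst_closed htgtc'']
      subst hq''
      have htvρ : ρ.targetVars = ∅ := by ext y; simp [Rule.targetVars, hpos]
      have htvρ'' : ρ''.targetVars = ∅ := by ext y; simp [Rule.targetVars, hpos'']
      have hsvρ : ρ.sourceVars = ∅ := by rw [Rule.sourceVars, hsrcρ]; exact hPc
      have hsvρ'' : ρ''.sourceVars = ∅ := by rw [Rule.sourceVars, hsrcρ'']; exact hQc
      refine ⟨{ρ''}, Set.finite_singleton _, ?_, ?_, ?_⟩
      · intro ρ' hmem
        rw [Set.eq_of_mem_singleton hmem]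
        refine ⟨ρ'', hρ'', id, fun _ _ => rfl, Set.injOn_id _, ?_, ?_⟩
        · intro y hy; rw [htvρ''] at hy; exact absurd hy (Set.notMem_empty y)
        · exact (rename_closed hpos'' hneg''
            (by rw [hsrcρ'']; exact hQc) htgtc'' id).symm
      · intro ρ' hmem
        rw [Set.eq_of_mem_singleton hmem]
        refine ⟨hρ''act, ⟨htgtc, htgtc'', htgto, htgto'', R', hB', hRq'⟩, ?_, ?_⟩
        · rw [htvρ, htvρ'', hsvρ, hsvρ'']; simp
        · intro y hy; rw [htvρ] at hy
          exact absurd hy.1 (Set.notMem_empty y)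
      · intro σ' hσ' _
        exact ⟨ρ'', rfl, hyps_trivial hpos'' hneg'' Tr _⟩

end GSOSPaper
end
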